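/- arXiv:1906.09604 — 4 statements merged into one kernel-verified Lean document; each statement's English description precedes it below -/
import Mathlib

section
/- Let (X,𝒳,μ) be a sigma-finite measure space, and for each x∈X let ξ(x,·):[0,∞)→ℝ be nondecreasing and right continuous with ξ(·,t) measurable for each t and μ-a.s. finite for t>0. Let T:X→[0,∞] be measurable with ∫∫_0^{T(x)} ξ(x,s)^- ds dμ < ∞. Fix α∈(0, μT) and λ∈ℝ, and set τ_λ(x)=inf{t: ξ(x,t)≥λ} ∧ T(x). If μτ_λ = α, then for every measurable τ with τ∈[0,T] μ-a.s. and μτ=α, one has μ∫_0^{τ_λ}ξ(s)ds ≤ μ∫_0^{τ}ξ(s)ds. -/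
open Set MeasureTheory Filter Topology
open scoped ENNReal

/-- volume of the "interval" determined by `c`. -/
lemma aux_vol (c : ℝ≥0∞) : volume {s : ℝ | 0 ≤ s ∧ ENNReal.ofReal s < c} = c := by
  rcases eq_or_ne c ⊤ with rfl | hc
  · have : {s : ℝ | 0 ≤ s ∧ ENNReal.ofReal s < ⊤} = Ici (0:ℝ) := by
      ext s; simp [ENNReal.ofReal_lt_top]
    rw [this]; simp
  · have : {s : ℝ | 0 ≤ s ∧ ENNReal.ofReal s < c} = Ico (0:ℝ) c.toReal := by
      ext s
      simp only [mem_setOf_eq, mem_Ico]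
      constructor
      · rintro ⟨hs, h⟩
        exact ⟨hs, (ENNReal.ofReal_lt_iff_lt_toReal hs hc).mp h⟩
      · rintro ⟨hs, h⟩
        exact ⟨hs, (ENNReal.ofReal_lt_iff_lt_toReal hs hc).mpr h⟩
    rw [this, Real.volume_Ico, sub_zero, ENNReal.ofReal_toReal hc]

lemma aux_set_meas {X : Type*} [MeasurableSpace X] {τ : X → ℝ≥0∞} (hτ : Measurable τ) :
    MeasurableSet {p : X × ℝ | 0 ≤ p.2 ∧ ENNReal.ofReal p.2 < τ p.1} := by
  have h1 : Measurable fun p : X × ℝ => ENNReal.ofReal p.2 :=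
    ENNReal.measurable_ofReal.comp measurable_snd
  have h2 : Measurable fun p : X × ℝ => τ p.1 := hτ.comp measurable_fst
  have he : {p : X × ℝ | 0 ≤ p.2 ∧ ENNReal.ofReal p.2 < τ p.1} =
      {p : X × ℝ | 0 ≤ p.2} ∩ {p : X × ℝ | ENNReal.ofReal p.2 < τ p.1} := rfl
  rw [he]
  exact (measurableSet_le measurable_const measurable_snd).inter (measurableSet_lt h1 h2)

lemma aux_pair {a b : ℝ} (h : a ≤ b) :
    ENNReal.ofReal a + ENNReal.ofReal (-b) ≤ ENNReal.ofReal b + ENNReal.ofReal (-a) := by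
  rcases le_or_gt 0 a with ha | ha
  · rw [ENNReal.ofReal_eq_zero.mpr (by linarith : -b ≤ 0)]
    calc ENNReal.ofReal a + 0 = ENNReal.ofReal a := by simp
      _ ≤ ENNReal.ofReal b := ENNReal.ofReal_le_ofReal h
      _ ≤ ENNReal.ofReal b + ENNReal.ofReal (-a) := le_self_add
  · rcases le_or_gt 0 b with hb | hb
    · rw [ENNReal.ofReal_eq_zero.mpr ha.le, ENNReal.ofReal_eq_zero.mpr (by linarith : -b ≤ 0)]
      simp
    · rw [ENNReal.ofReal_eq_zero.mpr ha.le, ENNReal.ofReal_eq_zero.mpr hb.le]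
      simpa using ENNReal.ofReal_le_ofReal (by linarith : -b ≤ -a)

lemma aux_esub {a b c d : ℝ≥0∞} (hb : b ≠ ⊤) (hd : d ≠ ⊤) (h : a + d ≤ c + b) :
    (a : EReal) - b ≤ (c : EReal) - d := by
  rcases eq_or_ne c ⊤ with rfl | hc
  · have hdb : ((d : EReal)) ≠ ⊥ := EReal.coe_ennreal_ne_bot d
    have : (⊤ : EReal) - d = ⊤ := by
      rw [sub_eq_add_neg, EReal.top_add_of_ne_bot]
      simp only [ne_eq, EReal.neg_eq_bot_iff]
      exact fun hh => hd (EReal.coe_ennreal_eq_top_iff.mp hh)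
    rw [EReal.coe_ennreal_top, this]
    exact le_top
  · have ha : a ≠ ⊤ := by
      intro haa
      rw [haa] at h
      simp only [top_add] at h
      exact (ENNReal.add_lt_top.mpr ⟨hc.lt_top, hb.lt_top⟩).ne (top_le_iff.mp h)
    have htr : a.toReal + d.toReal ≤ c.toReal + b.toReal := by
      rw [← ENNReal.toReal_add ha hd, ← ENNReal.toReal_add hc hb]
      exact ENNReal.toReal_mono (ENNReal.add_ne_top.mpr ⟨hc, hb⟩) h
    have key : ∀ x : ℝ≥0∞, x ≠ ⊤ → (x : EReal) = ((x.toReal : ℝ) : EReal) := by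
      intro x hx
      rw [← ENNReal.ofReal_toReal hx, EReal.coe_ennreal_ofReal,
        max_eq_left ENNReal.toReal_nonneg, ENNReal.toReal_ofReal ENNReal.toReal_nonneg]
    rw [key a ha, key b hb, key c hc, key d hd, ← EReal.coe_sub, ← EReal.coe_sub,
      EReal.coe_le_coe_iff]
    linarith

/-- Joint measurability of the right-continuous monotone modification. -/
lemma aux_joint {X : Type*} [MeasurableSpace X] (ξ : X → ℝ → ℝ)
    (hmeas : ∀ t : ℝ, Measurable fun x => ξ x t)
    (hrc : ∀ x, ∀ t ∈ Set.Ici (0 : ℝ), ContinuousWithinAt (ξ x) (Set.Ici t) t) :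
    Measurable (fun p : X × ℝ => ξ p.1 (max p.2 0)) := by
  set F : ℕ → X × ℝ → ℝ :=
    fun n p => ξ p.1 ((⌈(max p.2 0) * (n+1)⌉₊ : ℝ) / (n+1)) with hF
  have hFm : ∀ n, Measurable (F n) := by
    intro n
    have hg : Measurable (fun q : X × ℕ => ξ q.1 ((q.2 : ℝ) / (n+1))) :=
      measurable_from_prod_countable_left (fun k => hmeas ((k : ℝ) / (n+1)))
    have hc : Measurable (fun p : X × ℝ => ((p.1, ⌈(max p.2 0) * (n+1)⌉₊) : X × ℕ)) := by
      apply measurable_fst.prodMk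
      exact Nat.measurable_ceil.comp (((measurable_snd.max measurable_const).mul
        measurable_const))
    exact hg.comp hc
  have hlim : Tendsto F atTop (𝓝 (fun p : X × ℝ => ξ p.1 (max p.2 0))) := by
    rw [tendsto_pi_nhds]
    intro p
    set a := max p.2 0 with ha
    have ha0 : 0 ≤ a := le_max_right _ _
    have h1 : ∀ n : ℕ, a ≤ (⌈a * (n+1)⌉₊ : ℝ) / (n+1) := by
      intro n
      rw [le_div_iff₀ (by positivity)]
      exact Nat.le_ceil _
    have h2 : ∀ n : ℕ, (⌈a * (n+1)⌉₊ : ℝ) / (n+1) ≤ a + 1 / (n+1) := by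
      intro n
      rw [div_le_iff₀ (by positivity)]
      have := (Nat.ceil_lt_add_one (by positivity : (0:ℝ) ≤ a * (n+1))).le
      calc (⌈a * (n+1)⌉₊ : ℝ) ≤ a * (n+1) + 1 := this
        _ = (a + 1 / (n+1)) * (n+1) := by field_simp
    have hupper : Tendsto (fun n : ℕ => a + 1 / ((n:ℝ)+1)) atTop (𝓝 a) := by
      have : Tendsto (fun n : ℕ => 1 / ((n : ℝ) + 1)) atTop (𝓝 0) :=
        tendsto_one_div_add_atTop_nhds_zero_nat
      simpa using tendsto_const_nhds.add this
    have htend : Tendsto (fun n : ℕ => (⌈a * (n+1)⌉₊ : ℝ) / (n+1)) atTop (𝓝 a) :=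
      tendsto_of_tendsto_of_tendsto_of_le_of_le (g := fun _ : ℕ => a)
        (h := fun n : ℕ => a + 1 / (n+1)) tendsto_const_nhds hupper h1 h2
    have htendw : Tendsto (fun n : ℕ => (⌈a * (n+1)⌉₊ : ℝ) / (n+1)) atTop (𝓝[Set.Ici a] a) :=
      tendsto_nhdsWithin_of_tendsto_nhds_of_eventually_within _ htend
        (Eventually.of_forall h1)
    exact ((hrc p.1 a ha0).tendsto.comp htendw : _)
  exact measurable_of_tendsto_metrizable hFm hlim

/-- Measurability of the hitting-time function. -/
lemma aux_f_meas {X : Type*} [MeasurableSpace X] (ξ : X → ℝ → ℝ) (lam : ℝ)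
    (hmeas : ∀ t : ℝ, Measurable fun x => ξ x t)
    (hmono : ∀ x, MonotoneOn (ξ x) (Set.Ici (0 : ℝ))) :
    Measurable (fun x => sInf (ENNReal.ofReal '' {t : ℝ | 0 ≤ t ∧ lam ≤ ξ x t})) := by
  have hrepr : ∀ x, sInf (ENNReal.ofReal '' {t : ℝ | 0 ≤ t ∧ lam ≤ ξ x t}) =
      ⨅ q : ℚ, (if 0 ≤ (q:ℝ) ∧ lam ≤ ξ x q then ENNReal.ofReal q else ⊤) := by
    intro x
    apply le_antisymm
    · apply le_iInf
      intro q
      split_ifs with h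
      · exact sInf_le ⟨(q:ℝ), h, rfl⟩
      · exact le_top
    · apply le_sInf
      rintro b ⟨t, ht, rfl⟩
      apply ENNReal.le_of_forall_pos_le_add
      intro ε hε _
      obtain ⟨q, hq1, hq2⟩ := exists_rat_btwn (lt_add_of_pos_right t (by exact_mod_cast hε : (0:ℝ) < ε))
      have hq0 : 0 ≤ (q:ℝ) := le_of_lt (lt_of_le_of_lt ht.1 hq1)
      have hqS : lam ≤ ξ x q := le_trans ht.2 (hmono x ht.1 hq0 hq1.le)
      calc (⨅ q : ℚ, (if 0 ≤ (q:ℝ) ∧ lam ≤ ξ x q then ENNReal.ofReal q else ⊤))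
          ≤ (if 0 ≤ (q:ℝ) ∧ lam ≤ ξ x q then ENNReal.ofReal (q:ℝ) else ⊤) := iInf_le _ q
        _ = ENNReal.ofReal (q:ℝ) := by rw [if_pos ⟨hq0, hqS⟩]
        _ ≤ ENNReal.ofReal (t + ε) := ENNReal.ofReal_le_ofReal hq2.le
        _ = ENNReal.ofReal t + ENNReal.ofReal ε := ENNReal.ofReal_add ht.1 (by positivity)
        _ = ENNReal.ofReal t + ε := by rw [ENNReal.ofReal_coe_nnreal]
  simp_rw [hrepr]
  apply Measurable.iInf
  intro q
  rcases le_or_gt 0 (q:ℝ) with hq | hq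
  · have : (fun x => if 0 ≤ (q:ℝ) ∧ lam ≤ ξ x q then ENNReal.ofReal (q:ℝ) else ⊤) =
        fun x => if lam ≤ ξ x q then ENNReal.ofReal (q:ℝ) else ⊤ := by
      funext x; by_cases h : lam ≤ ξ x q <;> simp [h, hq]
    rw [this]
    exact Measurable.ite (measurableSet_le measurable_const (hmeas q)) measurable_const
      measurable_const
  · have : (fun x => if 0 ≤ (q:ℝ) ∧ lam ≤ ξ x q then ENNReal.ofReal (q:ℝ) else ⊤) =
        fun _ => (⊤ : ℝ≥0∞) := by
      funext x; simp [not_le.mpr hq]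
    rw [this]
    exact measurable_const

/-- If `s` is below the hitting time then `ξ x s ≤ lam`. -/
lemma aux_key1 {X : Type*} (ξ : X → ℝ → ℝ) (lam : ℝ) (T : X → ℝ≥0∞) {x : X} {s : ℝ}
    (hs : 0 ≤ s)
    (h : ENNReal.ofReal s < min (sInf (ENNReal.ofReal '' {t : ℝ | 0 ≤ t ∧ lam ≤ ξ x t})) (T x)) :
    ξ x s ≤ lam := by
  by_contra hc
  push_neg at hc
  have : sInf (ENNReal.ofReal '' {t : ℝ | 0 ≤ t ∧ lam ≤ ξ x t}) ≤ ENNReal.ofReal s :=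
    sInf_le ⟨s, ⟨hs, hc.le⟩, rfl⟩
  exact absurd (lt_of_lt_of_le (lt_of_lt_of_le h (min_le_left _ _)) this) (lt_irrefl _)

/-- If `s` is at or above the hitting time (and below `T x`) then `lam ≤ ξ x s`. -/
lemma aux_key2 {X : Type*} (ξ : X → ℝ → ℝ) (lam : ℝ) (T : X → ℝ≥0∞) {x : X} {s : ℝ}
    (hmono : ∀ x, MonotoneOn (ξ x) (Set.Ici (0 : ℝ)))
    (hrc : ∀ x, ∀ t ∈ Set.Ici (0 : ℝ), ContinuousWithinAt (ξ x) (Set.Ici t) t)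
    (hs : 0 ≤ s)
    (h1 : min (sInf (ENNReal.ofReal '' {t : ℝ | 0 ≤ t ∧ lam ≤ ξ x t})) (T x) ≤ ENNReal.ofReal s)
    (h2 : ENNReal.ofReal s < T x) :
    lam ≤ ξ x s := by
  set S := {t : ℝ | 0 ≤ t ∧ lam ≤ ξ x t} with hS
  have hf : sInf (ENNReal.ofReal '' S) ≤ ENNReal.ofReal s := by
    rcases min_le_iff.mp h1 with h | h
    · exact h
    · exact absurd (lt_of_lt_of_le h2 h) (lt_irrefl _)
  have hne : S.Nonempty := by
    by_contra hne
    rw [not_nonempty_iff_eq_empty] at hne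
    rw [hne, image_empty, sInf_empty] at hf
    exact ENNReal.ofReal_ne_top (top_le_iff.mp hf)
  have hbdd : BddBelow S := ⟨0, fun t ht => ht.1⟩
  set c := sInf S with hc
  have hc0 : 0 ≤ c := le_csInf hne (fun t ht => ht.1)
  -- c ≤ s
  have hcs : c ≤ s := by
    by_contra hcs
    push_neg at hcs
    have : ENNReal.ofReal c ≤ sInf (ENNReal.ofReal '' S) := by
      apply le_sInf
      rintro b ⟨t, ht, rfl⟩
      exact ENNReal.ofReal_le_ofReal (csInf_le hbdd ht)
    have h3 : ENNReal.ofReal c ≤ ENNReal.ofReal s := le_trans this hf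
    rw [ENNReal.ofReal_le_ofReal_iff hs] at h3
    · exact absurd h3 (not_le.mpr hcs)
  -- lam ≤ ξ x c via right continuity
  have hxc : lam ≤ ξ x c := by
    have htend : Tendsto (ξ x) (𝓝[>] c) (𝓝 (ξ x c)) :=
      ((hrc x c hc0).tendsto).mono_left (nhdsWithin_mono c Ioi_subset_Ici_self)
    apply ge_of_tendsto htend
    apply eventually_nhdsWithin_of_forall
    intro t ht
    obtain ⟨u, hu, hut⟩ := exists_lt_of_csInf_lt hne (show sInf S < t from ht)
    exact le_trans hu.2 (hmono x hu.1 (le_trans hu.1 hut.le) hut.le)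
  exact le_trans hxc (hmono x hc0 hs hcs)

/-- The (possibly infinite) value `μ ∫_0^{τ(x)} ξ(x,s) ds`, as an extended real:
the `∫⁻` of the positive part minus the `∫⁻` of the negative part. -/
noncomputable def clearingObjective {X : Type*} [MeasurableSpace X] (μ : Measure X)
    (ξ : X → ℝ → ℝ) (τ : X → ℝ≥0∞) : EReal :=
  ((∫⁻ x, (∫⁻ s in {s : ℝ | 0 ≤ s ∧ ENNReal.ofReal s < τ x},
      ENNReal.ofReal (ξ x s)) ∂μ : ℝ≥0∞) : EReal) -
  ((∫⁻ x, (∫⁻ s in {s : ℝ | 0 ≤ s ∧ ENNReal.ofReal s < τ x},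
      ENNReal.ofReal (-(ξ x s))) ∂μ : ℝ≥0∞) : EReal)

/-- Theorem 1 (case `μτ_λ = α`): `τ_λ` solves the constrained minimization. -/
theorem stmt4 {X : Type*} [MeasurableSpace X] (μ : Measure X) [SigmaFinite μ]
    (ξ : X → ℝ → ℝ)
    (hmeas : ∀ t : ℝ, Measurable fun x => ξ x t)
    (hmono : ∀ x, MonotoneOn (ξ x) (Set.Ici (0 : ℝ)))
    (hrc : ∀ x, ∀ t ∈ Set.Ici (0 : ℝ), ContinuousWithinAt (ξ x) (Set.Ici t) t)
    (T : X → ℝ≥0∞) (hT : Measurable T)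
    (hint : (∫⁻ x, (∫⁻ s in {s : ℝ | 0 ≤ s ∧ ENNReal.ofReal s ≤ T x},
        ENNReal.ofReal (-(ξ x s))) ∂μ) < ⊤)
    (α : ℝ) (hα0 : 0 < α) (hαT : ENNReal.ofReal α < ∫⁻ x, T x ∂μ)
    (lam : ℝ) (τlam : X → ℝ≥0∞)
    (hτlam : ∀ x, τlam x =
      min (sInf (ENNReal.ofReal '' {t : ℝ | 0 ≤ t ∧ lam ≤ ξ x t})) (T x))
    (hτlamα : ∫⁻ x, τlam x ∂μ = ENNReal.ofReal α) :
    ∀ τ : X → ℝ≥0∞, Measurable τ → (∀ᵐ x ∂μ, τ x ≤ T x) →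
      (∫⁻ x, τ x ∂μ) = ENNReal.ofReal α →
      clearingObjective μ ξ τlam ≤ clearingObjective μ ξ τ := by
  intro τ hτm hτT hτα
  classical
  -- the jointly measurable modification
  set ξM : X × ℝ → ℝ := fun p => ξ p.1 (max p.2 0) with hξMdef
  have hξM : Measurable ξM := aux_joint ξ hmeas hrc
  have hτlamm : Measurable τlam := by
    have : τlam = fun x =>
        min (sInf (ENNReal.ofReal '' {t : ℝ | 0 ≤ t ∧ lam ≤ ξ x t})) (T x) := funext hτlam
    rw [this]
    exact (aux_f_meas ξ lam hmeas hmono).min hT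
  have hτlamT : ∀ x, τlam x ≤ T x := fun x => (hτlam x) ▸ min_le_right _ _
  set A : X → Set ℝ := fun x => {s : ℝ | 0 ≤ s ∧ ENNReal.ofReal s < τlam x} with hAdef
  set B : X → Set ℝ := fun x => {s : ℝ | 0 ≤ s ∧ ENNReal.ofReal s < τ x} with hBdef
  have hsec : ∀ x, Measurable (fun s => ξM (x, s)) :=
    fun x => hξM.comp measurable_prodMk_left
  have hsetsec : ∀ (c : ℝ≥0∞), MeasurableSet {s : ℝ | 0 ≤ s ∧ ENNReal.ofReal s < c} := by
    intro c
    have : {s : ℝ | 0 ≤ s ∧ ENNReal.ofReal s < c} =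
        {s : ℝ | 0 ≤ s} ∩ (ENNReal.ofReal) ⁻¹' (Iio c) := rfl
    rw [this]
    exact (measurableSet_le measurable_const measurable_id).inter
      (ENNReal.measurable_ofReal (measurableSet_Iio))
  have hAm : ∀ x, MeasurableSet (A x) := fun x => hsetsec _
  have hBm : ∀ x, MeasurableSet (B x) := fun x => hsetsec _
  -- the four inner quantities (with the modified kernel)
  set lp : ℝ≥0∞ := ENNReal.ofReal lam with hlp
  set ln : ℝ≥0∞ := ENNReal.ofReal (-lam) with hln
  set IAp : X → ℝ≥0∞ := fun x => ∫⁻ s in A x, ENNReal.ofReal (ξM (x, s)) with hIAp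
  set IAn : X → ℝ≥0∞ := fun x => ∫⁻ s in A x, ENNReal.ofReal (-(ξM (x, s))) with hIAn
  set IBp : X → ℝ≥0∞ := fun x => ∫⁻ s in B x, ENNReal.ofReal (ξM (x, s)) with hIBp
  set IBn : X → ℝ≥0∞ := fun x => ∫⁻ s in B x, ENNReal.ofReal (-(ξM (x, s))) with hIBn
  -- these agree with the unmodified inner integrals
  have congrA : ∀ x, (∫⁻ s in A x, ENNReal.ofReal (ξ x s)) = IAp x := by
    intro x
    apply setLIntegral_congr_fun (hAm x)
    intro s hs
    simp [hξMdef, max_eq_left hs.1]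
  have congrA' : ∀ x, (∫⁻ s in A x, ENNReal.ofReal (-(ξ x s))) = IAn x := by
    intro x
    apply setLIntegral_congr_fun (hAm x)
    intro s hs
    simp [hξMdef, max_eq_left hs.1]
  have congrB : ∀ x, (∫⁻ s in B x, ENNReal.ofReal (ξ x s)) = IBp x := by
    intro x
    apply setLIntegral_congr_fun (hBm x)
    intro s hs
    simp [hξMdef, max_eq_left hs.1]
  have congrB' : ∀ x, (∫⁻ s in B x, ENNReal.ofReal (-(ξ x s))) = IBn x := by
    intro x
    apply setLIntegral_congr_fun (hBm x)
    intro s hs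
    simp [hξMdef, max_eq_left hs.1]
  -- measurability of the four quantities in x
  have hmeasI : ∀ (σ : X → ℝ≥0∞), Measurable σ → ∀ (g : X × ℝ → ℝ≥0∞), Measurable g →
      Measurable (fun x => ∫⁻ s in {s : ℝ | 0 ≤ s ∧ ENNReal.ofReal s < σ x}, g (x, s)) := by
    intro σ hσ g hg
    have h1 : Measurable (fun p : X × ℝ =>
        ({p : X × ℝ | 0 ≤ p.2 ∧ ENNReal.ofReal p.2 < σ p.1}.indicator g) p) :=
      hg.indicator (aux_set_meas hσ)
    have h2 := Measurable.lintegral_prod_right' (ν := volume) h1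
    have h3 : ∀ x, (∫⁻ s in {s : ℝ | 0 ≤ s ∧ ENNReal.ofReal s < σ x}, g (x, s)) =
        ∫⁻ s, ({p : X × ℝ | 0 ≤ p.2 ∧ ENNReal.ofReal p.2 < σ p.1}.indicator g) (x, s) := by
      intro x
      rw [← lintegral_indicator (hsetsec (σ x))]
      refine lintegral_congr fun s => ?_
      simp only [Set.indicator_apply, Set.mem_setOf_eq]
    simp_rw [h3]
    exact h2
  have hIApm : Measurable IAp := hmeasI τlam hτlamm _ (ENNReal.measurable_ofReal.comp hξM)
  have hIAnm : Measurable IAn := hmeasI τlam hτlamm _ (ENNReal.measurable_ofReal.comp hξM.neg)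
  have hIBpm : Measurable IBp := hmeasI τ hτm _ (ENNReal.measurable_ofReal.comp hξM)
  have hIBnm : Measurable IBn := hmeasI τ hτm _ (ENNReal.measurable_ofReal.comp hξM.neg)
  -- pointwise (in x) inequality, a.e.
  have hptx : ∀ᵐ x ∂μ, IAp x + ln * τlam x + (lp * τ x + IBn x) ≤
      lp * τlam x + IAn x + (IBp x + ln * τ x) := by
    filter_upwards [hτT] with x hx
    have hpts : ∀ s : ℝ,
        (A x).indicator (fun s => ENNReal.ofReal (ξM (x, s)) + ln) s +
          (B x).indicator (fun s => lp + ENNReal.ofReal (-(ξM (x, s)))) s ≤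
        (A x).indicator (fun s => lp + ENNReal.ofReal (-(ξM (x, s)))) s +
          (B x).indicator (fun s => ENNReal.ofReal (ξM (x, s)) + ln) s := by
      intro s
      by_cases hsA : s ∈ A x <;> by_cases hsB : s ∈ B x
      · rw [Set.indicator_of_mem hsA, Set.indicator_of_mem hsB,
          Set.indicator_of_mem hsA, Set.indicator_of_mem hsB]
        exact le_of_eq (add_comm _ _)
      · rw [Set.indicator_of_mem hsA, Set.indicator_of_notMem hsB,
          Set.indicator_of_mem hsA, Set.indicator_of_notMem hsB]
        simp only [add_zero]
        have hkey : ξ x s ≤ lam := aux_key1 ξ lam T hsA.1 ((hτlam x) ▸ hsA.2)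
        have : ξM (x, s) = ξ x s := by simp [hξMdef, max_eq_left hsA.1]
        rw [this]
        exact aux_pair hkey
      · rw [Set.indicator_of_notMem hsA, Set.indicator_of_mem hsB,
          Set.indicator_of_notMem hsA, Set.indicator_of_mem hsB]
        simp only [zero_add]
        have hs0 : 0 ≤ s := hsB.1
        have hnotA : τlam x ≤ ENNReal.ofReal s := by
          by_contra hcon
          exact hsA ⟨hs0, not_le.mp hcon⟩
        have hsT : ENNReal.ofReal s < T x := lt_of_lt_of_le hsB.2 hx
        have hkey : lam ≤ ξ x s :=
          aux_key2 ξ lam T hmono hrc hs0 ((hτlam x) ▸ hnotA) hsT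
        have : ξM (x, s) = ξ x s := by simp [hξMdef, max_eq_left hs0]
        rw [this]
        exact aux_pair hkey
      · rw [Set.indicator_of_notMem hsA, Set.indicator_of_notMem hsB,
          Set.indicator_of_notMem hsA, Set.indicator_of_notMem hsB]
    have hints := lintegral_mono hpts (μ := volume)
    -- split the integrals of sums of indicators
    have hu : Measurable (fun s => ENNReal.ofReal (ξM (x, s))) :=
      ENNReal.measurable_ofReal.comp (hsec x)
    have hv : Measurable (fun s => ENNReal.ofReal (-(ξM (x, s)))) :=
      ENNReal.measurable_ofReal.comp (hsec x).neg
    rw [lintegral_add_left (((hu.add_const ln)).indicator (hAm x)),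
      lintegral_add_left (((hv.const_add lp)).indicator (hAm x)),
      lintegral_indicator (hAm x), lintegral_indicator (hBm x),
      lintegral_indicator (hAm x), lintegral_indicator (hBm x),
      lintegral_add_right _ measurable_const,
      lintegral_add_right _ measurable_const,
      lintegral_add_left measurable_const,
      lintegral_add_left measurable_const,
      setLIntegral_const, setLIntegral_const, setLIntegral_const, setLIntegral_const] at hints
    have volA : volume (A x) = τlam x := aux_vol (τlam x)
    have volB : volume (B x) = τ x := aux_vol (τ x)
    rw [volA, volB] at hints
    calc IAp x + ln * τlam x + (lp * τ x + IBn x)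
        = IAp x + ln * τlam x + (lp * τ x + IBn x) := rfl
      _ ≤ lp * τlam x + IAn x + (IBp x + ln * τ x) := by
          convert hints using 2 <;> ring
  -- integrate the pointwise inequality
  have hIneq := lintegral_mono_ae hptx
  rw [lintegral_add_left (show Measurable (fun x => IAp x + ln * τlam x) from
      hIApm.add ((measurable_const).mul hτlamm)),
    lintegral_add_left hIApm,
    lintegral_add_left (show Measurable (fun x => lp * τ x) from (measurable_const).mul hτm),
    lintegral_add_left (show Measurable (fun x => lp * τlam x + IAn x) from
      ((measurable_const).mul hτlamm).add hIAnm),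
    lintegral_add_left (show Measurable (fun x => lp * τlam x) from (measurable_const).mul hτlamm),
    lintegral_add_left hIBpm,
    lintegral_const_mul ln hτlamm, lintegral_const_mul lp hτlamm,
    lintegral_const_mul lp hτm, lintegral_const_mul ln hτm,
    hτlamα, hτα] at hIneq
  -- name the four outer integrals
  set Pl : ℝ≥0∞ := ∫⁻ x, IAp x ∂μ with hPl
  set Nl : ℝ≥0∞ := ∫⁻ x, IAn x ∂μ with hNl
  set P : ℝ≥0∞ := ∫⁻ x, IBp x ∂μ with hP
  set N : ℝ≥0∞ := ∫⁻ x, IBn x ∂μ with hN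
  set α' : ℝ≥0∞ := ENNReal.ofReal α with hα'
  have hα'top : α' ≠ ⊤ := ENNReal.ofReal_ne_top
  have hlnα : ln * α' ≠ ⊤ := ENNReal.mul_ne_top ENNReal.ofReal_ne_top hα'top
  have hlpα : lp * α' ≠ ⊤ := ENNReal.mul_ne_top ENNReal.ofReal_ne_top hα'top
  -- cancel the finite terms
  have hmain : Pl + N ≤ P + Nl := by
    have h1 : Pl + N + (ln * α' + lp * α') ≤ P + Nl + (ln * α' + lp * α') := by
      calc Pl + N + (ln * α' + lp * α') = Pl + ln * α' + (lp * α' + N) := by ring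
        _ ≤ lp * α' + Nl + (P + ln * α') := hIneq
        _ = P + Nl + (ln * α' + lp * α') := by ring
    exact (ENNReal.add_le_add_iff_right (ENNReal.add_ne_top.mpr ⟨hlnα, hlpα⟩)).mp h1
  -- finiteness of the negative parts
  have hNl : Nl ≠ ⊤ := by
    apply ne_top_of_le_ne_top hint.ne
    apply lintegral_mono
    intro x
    rw [← congrA' x]
    apply lintegral_mono_set
    intro s hs
    exact ⟨hs.1, le_of_lt (lt_of_lt_of_le hs.2 (hτlamT x))⟩
  have hNe : N ≠ ⊤ := by
    apply ne_top_of_le_ne_top hint.ne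
    apply lintegral_mono_ae
    filter_upwards [hτT] with x hx
    rw [← congrB' x]
    apply lintegral_mono_set
    intro s hs
    exact ⟨hs.1, le_of_lt (lt_of_lt_of_le hs.2 hx)⟩
  -- conclude
  have e1 : (∫⁻ x, (∫⁻ s in {s : ℝ | 0 ≤ s ∧ ENNReal.ofReal s < τlam x},
      ENNReal.ofReal (ξ x s)) ∂μ) = Pl := lintegral_congr congrA
  have e2 : (∫⁻ x, (∫⁻ s in {s : ℝ | 0 ≤ s ∧ ENNReal.ofReal s < τlam x},
      ENNReal.ofReal (-(ξ x s))) ∂μ) = Nl := lintegral_congr congrA'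
  have e3 : (∫⁻ x, (∫⁻ s in {s : ℝ | 0 ≤ s ∧ ENNReal.ofReal s < τ x},
      ENNReal.ofReal (ξ x s)) ∂μ) = P := lintegral_congr congrB
  have e4 : (∫⁻ x, (∫⁻ s in {s : ℝ | 0 ≤ s ∧ ENNReal.ofReal s < τ x},
      ENNReal.ofReal (-(ξ x s))) ∂μ) = N := lintegral_congr congrB'
  have hobj1 : clearingObjective μ ξ τlam = ((Pl : EReal) - (Nl : EReal)) := by
    unfold clearingObjective
    rw [e1, e2]
  have hobj2 : clearingObjective μ ξ τ = ((P : EReal) - (N : EReal)) := by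
    unfold clearingObjective
    rw [e3, e4]
  rw [hobj1, hobj2]
  exact aux_esub hNl hNe hmain
end

section
/- In the setting of the previous statement, suppose λ∈ℝ satisfies μτ_λ < α < μτ_{λ+} with μτ_{λ+} < ∞, where τ_{λ+}(x)=inf{t: ξ(x,t)>λ}∧T(x). Let q = (α − μτ_λ)/(μτ_{λ+} − μτ_λ). Then σ := (1−q)τ_λ + q τ_{λ+} satisfies σ∈[0,T] μ-a.s., μσ = α, and μ∫_0^{σ}ξ(s)ds ≤ μ∫_0^{τ}ξ(s)ds for every measurable τ with τ∈[0,T] μ-a.s. and μτ = α. -/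
open Set MeasureTheory
open scoped ENNReal

section ClearingAux
open Filter Topology


-- measurable composition with countable-range function
lemma meas_comp_countable {X : Type*} [MeasurableSpace X] (ξ : X → ℝ → ℝ)
    (hmeas : ∀ t : ℝ, Measurable fun x => ξ x t) (g : ℝ → ℝ) (hg : Measurable g)
    (hcnt : (Set.range g).Countable) :
    Measurable fun p : X × ℝ => ξ p.1 (g p.2) := by
  intro B hB
  have h : (fun p : X × ℝ => ξ p.1 (g p.2)) ⁻¹' B
      = ⋃ v ∈ Set.range g, ((fun x => ξ x v) ⁻¹' B) ×ˢ (g ⁻¹' {v}) := by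
    ext ⟨x, s⟩
    simp only [Set.mem_preimage, Set.mem_iUnion, Set.mem_prod, Set.mem_range,
      Set.mem_singleton_iff]
    constructor
    · intro hmem; exact ⟨g s, ⟨s, rfl⟩, hmem, rfl⟩
    · rintro ⟨v, _, hmem, rfl⟩; exact hmem
  rw [h]
  exact MeasurableSet.biUnion hcnt fun v _ =>
    ((hmeas v) hB).prod (hg (measurableSet_singleton v))

lemma jointMeas {X : Type*} [MeasurableSpace X] (ξ : X → ℝ → ℝ)
    (hmeas : ∀ t : ℝ, Measurable fun x => ξ x t)
    (hrc : ∀ x, ∀ t ∈ Set.Ici (0:ℝ), ContinuousWithinAt (ξ x) (Set.Ici t) t) :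
    Measurable fun p : X × ℝ => ξ p.1 (max p.2 0) := by
  set d : ℕ → ℝ → ℝ := fun n t => (⌈t * 2^n⌉ : ℤ) / 2^n with hd
  have hdmeas : ∀ n, Measurable fun t : ℝ => d n (max t 0) := by
    intro n
    exact ((measurable_of_countable (fun k : ℤ => (k:ℝ))).comp (((measurable_id.max measurable_const).mul measurable_const).ceil)).div measurable_const
  have hdcnt : ∀ n, (Set.range fun t : ℝ => d n (max t 0)).Countable := by
    intro n
    apply Set.Countable.mono _ (Set.countable_range fun k : ℤ => (k : ℝ) / 2^n)
    rintro _ ⟨t, rfl⟩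
    exact ⟨⌈max t 0 * 2^n⌉, rfl⟩
  have hfn : ∀ n, Measurable fun p : X × ℝ => ξ p.1 (d n (max p.2 0)) := fun n =>
    meas_comp_countable ξ hmeas _ (hdmeas n) (hdcnt n)
  apply measurable_of_tendsto_metrizable hfn
  rw [tendsto_pi_nhds]
  intro p
  set t := max p.2 0 with ht
  have ht0 : 0 ≤ t := le_max_right _ _
  have hge : ∀ n, t ≤ d n t := by
    intro n
    rw [hd]
    rw [le_div_iff₀ (by positivity)]
    exact Int.le_ceil _
  have hlt : ∀ n, d n t ≤ t + (2^n)⁻¹ := by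
    intro n
    rw [hd]
    rw [div_le_iff₀ (by positivity)]
    have := (Int.ceil_lt_add_one (t * 2^n)).le
    calc ((⌈t * 2^n⌉ : ℤ) : ℝ) ≤ t * 2^n + 1 := this
      _ = (t + (2^n)⁻¹) * 2^n := by field_simp
  have htend : Tendsto (fun n => d n t) atTop (𝓝[Set.Ici t] t) := by
    rw [tendsto_nhdsWithin_iff]
    constructor
    · have h2 : Tendsto (fun n : ℕ => t + ((2:ℝ)^n)⁻¹) atTop (𝓝 (t + 0)) :=
        tendsto_const_nhds.add (tendsto_inv_atTop_zero.comp (tendsto_pow_atTop_atTop_of_one_lt (one_lt_two : (1:ℝ) < 2)))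
      rw [add_zero] at h2
      exact tendsto_of_tendsto_of_tendsto_of_le_of_le tendsto_const_nhds h2 hge hlt
    · exact Eventually.of_forall fun n => hge n
  exact (hrc p.1 t ht0).tendsto.comp htend

open Classical in
lemma sInf_eq_iInf_rat (f : ℝ → ℝ) (hf : MonotoneOn f (Set.Ici 0)) (p : ℝ → Prop)
    (hp : ∀ v w, v ≤ w → p v → p w) :
    sInf (ENNReal.ofReal '' {t | 0 ≤ t ∧ p (f t)}) =
      ⨅ (r : ℚ), if 0 ≤ (r : ℝ) ∧ p (f r) then ENNReal.ofReal r else ⊤ := by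
  apply le_antisymm
  · refine le_iInf fun r => ?_
    split_ifs with h
    · exact sInf_le ⟨r, ⟨h.1, h.2⟩, rfl⟩
    · exact le_top
  · refine le_sInf ?_
    rintro _ ⟨t, ⟨ht0, htp⟩, rfl⟩
    refine ENNReal.le_of_forall_pos_le_add fun ε hε _ => ?_
    obtain ⟨r, hr1, hr2⟩ := exists_rat_btwn (lt_add_of_pos_right t (by positivity : (0:ℝ) < ε))
    have hr0 : 0 ≤ (r : ℝ) := ht0.trans hr1.le
    have hpr : p (f r) := hp _ _ (hf ht0 hr0 hr1.le) htp
    calc (⨅ (r : ℚ), if 0 ≤ (r : ℝ) ∧ p (f r) then ENNReal.ofReal r else ⊤)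
        ≤ if 0 ≤ (r : ℝ) ∧ p (f r) then ENNReal.ofReal r else ⊤ := iInf_le _ r
      _ = ENNReal.ofReal r := by rw [if_pos ⟨hr0, hpr⟩]
      _ ≤ ENNReal.ofReal (t + ε) := ENNReal.ofReal_le_ofReal hr2.le
      _ = ENNReal.ofReal t + ENNReal.ofReal ε := ENNReal.ofReal_add ht0 ε.2
      _ = ENNReal.ofReal t + ε := by rw [ENNReal.ofReal_coe_nnreal]

lemma ge_of_sInf_le (f : ℝ → ℝ) (hf : MonotoneOn f (Set.Ici 0))
    (hrc : ∀ t ∈ Set.Ici (0:ℝ), ContinuousWithinAt f (Set.Ici t) t) (lam s : ℝ) (hs : 0 ≤ s)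
    (h : sInf (ENNReal.ofReal '' {t | 0 ≤ t ∧ lam ≤ f t}) ≤ ENNReal.ofReal s) :
    lam ≤ f s := by
  have key : ∀ u, s < u → lam ≤ f u := by
    intro u hu
    have hu0 : (0:ℝ) < u := hs.trans_lt hu
    have h2 : sInf (ENNReal.ofReal '' {t | 0 ≤ t ∧ lam ≤ f t}) < ENNReal.ofReal u :=
      h.trans_lt ((ENNReal.ofReal_lt_ofReal_iff hu0).mpr hu)
    obtain ⟨_, ⟨t, ⟨ht0, htlam⟩, rfl⟩, hlt⟩ := sInf_lt_iff.mp h2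
    have htu : t ≤ u := ((ENNReal.ofReal_lt_ofReal_iff hu0).mp hlt).le
    exact htlam.trans (hf ht0 (ht0.trans htu) htu)
  have htend : Tendsto f (𝓝[>] s) (𝓝 (f s)) :=
    (hrc s hs).tendsto.mono_left (nhdsWithin_mono _ Set.Ioi_subset_Ici_self)
  exact ge_of_tendsto htend (eventually_nhdsWithin_of_forall fun u hu => key u hu)

lemma le_of_lt_sInf (f : ℝ → ℝ) (lam s : ℝ) (hs : 0 ≤ s)
    (h : ENNReal.ofReal s < sInf (ENNReal.ofReal '' {t | 0 ≤ t ∧ lam < f t})) : f s ≤ lam := by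
  by_contra hc
  push_neg at hc
  have hmem : ENNReal.ofReal s ∈ ENNReal.ofReal '' {t | 0 ≤ t ∧ lam < f t} := ⟨s, ⟨hs, hc⟩, rfl⟩
  exact absurd (sInf_le hmem) (not_le.mpr h)

lemma ofReal_max (a : ℝ) : ENNReal.ofReal a = ENNReal.ofReal (max a 0) := by
  rcases le_total 0 a with h | h
  · rw [max_eq_left h]
  · rw [max_eq_right h, ENNReal.ofReal_eq_zero.mpr h, ENNReal.ofReal_zero]

lemma ennreal_star (v lam : ℝ) :
    ENNReal.ofReal v + ENNReal.ofReal (lam - v) + ENNReal.ofReal (-lam) =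
    ENNReal.ofReal (-v) + ENNReal.ofReal (v - lam) + ENNReal.ofReal lam := by
  have hm : ∀ a : ℝ, max a 0 = (a + |a|) / 2 := by
    intro a
    rcases le_total 0 a with h | h
    · rw [max_eq_left h, abs_of_nonneg h]; ring
    · rw [max_eq_right h, abs_of_nonpos h]; ring
  have hre : max v 0 + max (lam - v) 0 + max (-lam) 0
      = max (-v) 0 + max (v - lam) 0 + max lam 0 := by
    rw [hm, hm, hm, hm, hm, hm]
    have h1 : |(-v)| = |v| := abs_neg v
    have h2 : |lam - v| = |v - lam| := abs_sub_comm lam v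
    have h3 : |(-lam)| = |lam| := abs_neg lam
    rw [h1, h2, h3]; ring
  rw [ofReal_max v, ofReal_max (lam - v), ofReal_max (-lam), ofReal_max (-v),
    ofReal_max (v - lam), ofReal_max lam,
    ← ENNReal.ofReal_add (le_max_right _ _) (le_max_right _ _),
    ← ENNReal.ofReal_add (by positivity) (le_max_right _ _),
    ← ENNReal.ofReal_add (le_max_right _ _) (le_max_right _ _),
    ← ENNReal.ofReal_add (by positivity) (le_max_right _ _), hre]

def Rset {X : Type*} (τ : X → ℝ≥0∞) (x : X) : Set ℝ := {s | 0 ≤ s ∧ ENNReal.ofReal s < τ x}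

lemma Rset_measurableSet {X : Type*} (τ : X → ℝ≥0∞) (x : X) : MeasurableSet (Rset τ x) := by
  have h : Rset τ x = Set.Ici 0 ∩ (fun s : ℝ => ENNReal.ofReal s) ⁻¹' (Set.Iio (τ x)) := rfl
  rw [h]
  exact measurableSet_Ici.inter (ENNReal.measurable_ofReal measurableSet_Iio)

lemma Rset_vol {X : Type*} {τ : X → ℝ≥0∞} {x : X} (h : τ x ≠ ⊤) :
    (volume : Measure ℝ) (Rset τ x) = τ x := by
  have he : Rset τ x = Set.Ico 0 (τ x).toReal := by
    ext s
    simp only [Rset, Set.mem_setOf_eq, Set.mem_Ico]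
    exact and_congr_right fun hs => ENNReal.ofReal_lt_iff_lt_toReal hs h
  rw [he, Real.volume_Ico, sub_zero, ENNReal.ofReal_toReal h]

lemma inner_meas {X : Type*} [MeasurableSpace X] (ξ : X → ℝ → ℝ)
    (hj : Measurable fun p : X × ℝ => ξ p.1 (max p.2 0))
    {τ : X → ℝ≥0∞} (hτ : Measurable τ) (g : ℝ → ℝ≥0∞) (hg : Measurable g) :
    Measurable fun x => ∫⁻ s in Rset τ x, g (ξ x (max s 0)) := by
  have h1 : ∀ x, ∫⁻ s in Rset τ x, g (ξ x (max s 0))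
      = ∫⁻ s, ({p : X × ℝ | 0 ≤ p.2 ∧ ENNReal.ofReal p.2 < τ p.1}.indicator
          (fun p => g (ξ p.1 (max p.2 0)))) (x, s) := by
    intro x
    rw [← lintegral_indicator (Rset_measurableSet τ x)]
    refine lintegral_congr fun s => ?_
    by_cases hs : s ∈ Rset τ x
    · rw [Set.indicator_of_mem hs, Set.indicator_of_mem (show (x, s) ∈ _ from hs)]
    · rw [Set.indicator_of_notMem hs, Set.indicator_of_notMem (show (x, s) ∉ _ from hs)]
  simp only [h1]
  apply Measurable.lintegral_prod_right
  apply Measurable.indicator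
  · exact hg.comp hj
  · have hA : MeasurableSet {p : X × ℝ | 0 ≤ p.2} :=
      measurableSet_le measurable_const measurable_snd
    have hB : MeasurableSet {p : X × ℝ | ENNReal.ofReal p.2 < τ p.1} :=
      measurableSet_lt (ENNReal.measurable_ofReal.comp measurable_snd) (hτ.comp measurable_fst)
    exact hA.inter hB


lemma eqE {X : Type*} [MeasurableSpace X] (μ : Measure X) (ξ : X → ℝ → ℝ)
    (hj : Measurable fun p : X × ℝ => ξ p.1 (max p.2 0))
    (hm : ∀ x, Monotone fun s => ξ x (max s 0))
    (lam : ℝ) {τ : X → ℝ≥0∞} (hτ : Measurable τ) (α : ℝ)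
    (hτint : ∫⁻ x, τ x ∂μ = ENNReal.ofReal α) :
    (∫⁻ x, (∫⁻ s in Rset τ x, ENNReal.ofReal (ξ x (max s 0))) ∂μ)
      + (∫⁻ x, (∫⁻ s in Rset τ x, ENNReal.ofReal (lam - ξ x (max s 0))) ∂μ)
      + ENNReal.ofReal (-lam) * ENNReal.ofReal α
    = (∫⁻ x, (∫⁻ s in Rset τ x, ENNReal.ofReal (-(ξ x (max s 0)))) ∂μ)
      + (∫⁻ x, (∫⁻ s in Rset τ x, ENNReal.ofReal (ξ x (max s 0) - lam)) ∂μ)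
      + ENNReal.ofReal lam * ENNReal.ofReal α := by
  have hfin : ∀ᵐ x ∂μ, τ x < ⊤ := ae_lt_top hτ (by rw [hτint]; exact ENNReal.ofReal_ne_top)
  have hmx : ∀ x, Measurable fun s => ξ x (max s 0) := fun x => (hm x).measurable
  have hpt : ∀ᵐ x ∂μ, (∫⁻ s in Rset τ x, ENNReal.ofReal (ξ x (max s 0)))
      + (∫⁻ s in Rset τ x, ENNReal.ofReal (lam - ξ x (max s 0)))
      + ENNReal.ofReal (-lam) * τ x
    = (∫⁻ s in Rset τ x, ENNReal.ofReal (-(ξ x (max s 0))))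
      + (∫⁻ s in Rset τ x, ENNReal.ofReal (ξ x (max s 0) - lam))
      + ENNReal.ofReal lam * τ x := by
    filter_upwards [hfin] with x hx
    have hsplit : ∀ (g1 g2 : ℝ → ℝ≥0∞) (c : ℝ≥0∞), Measurable g2 →
        ∫⁻ s in Rset τ x, (g1 (ξ x (max s 0)) + g2 (ξ x (max s 0)) + c)
          = (∫⁻ s in Rset τ x, g1 (ξ x (max s 0)))
            + (∫⁻ s in Rset τ x, g2 (ξ x (max s 0))) + c * τ x := by
      intro g1 g2 c hg2
      have hg2' : Measurable fun s : ℝ => g2 (ξ x (max s 0)) := hg2.comp (hmx x)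
      rw [lintegral_add_right _ measurable_const,
        lintegral_add_right _ hg2', setLIntegral_const, Rset_vol hx.ne]
    calc (∫⁻ s in Rset τ x, ENNReal.ofReal (ξ x (max s 0)))
        + (∫⁻ s in Rset τ x, ENNReal.ofReal (lam - ξ x (max s 0)))
        + ENNReal.ofReal (-lam) * τ x
        = ∫⁻ s in Rset τ x, (ENNReal.ofReal (ξ x (max s 0))
            + ENNReal.ofReal (lam - ξ x (max s 0)) + ENNReal.ofReal (-lam)) :=
          (hsplit (fun v => ENNReal.ofReal v) (fun v => ENNReal.ofReal (lam - v)) _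
            ((measurable_const.sub measurable_id).ennreal_ofReal)).symm
      _ = ∫⁻ s in Rset τ x, (ENNReal.ofReal (-(ξ x (max s 0)))
            + ENNReal.ofReal (ξ x (max s 0) - lam) + ENNReal.ofReal lam) :=
          lintegral_congr fun s => ennreal_star (ξ x (max s 0)) lam
      _ = _ :=
          hsplit (fun v => ENNReal.ofReal (-v)) (fun v => ENNReal.ofReal (v - lam)) _
            ((measurable_id.sub measurable_const).ennreal_ofReal)
  have hmain := lintegral_congr_ae hpt
  have mP := inner_meas ξ hj hτ (fun v => ENNReal.ofReal v) ENNReal.measurable_ofReal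
  have mNl := inner_meas ξ hj hτ (fun v => ENNReal.ofReal (lam - v))
    ((measurable_const.sub measurable_id).ennreal_ofReal)
  have mN := inner_meas ξ hj hτ (fun v => ENNReal.ofReal (-v))
    (measurable_id.neg.ennreal_ofReal)
  have mPl := inner_meas ξ hj hτ (fun v => ENNReal.ofReal (v - lam))
    ((measurable_id.sub measurable_const).ennreal_ofReal)
  rw [lintegral_add_left' (mP.fun_add mNl).aemeasurable, lintegral_add_left' mP.aemeasurable,
    lintegral_const_mul' _ _ ENNReal.ofReal_ne_top, hτint,
    lintegral_add_left' (mN.fun_add mPl).aemeasurable, lintegral_add_left' mN.aemeasurable,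
    lintegral_const_mul' _ _ ENNReal.ofReal_ne_top, hτint] at hmain
  exact hmain

lemma coe_ennreal_fin (x : ℝ≥0∞) (hx : x ≠ ⊤) : (x : EReal) = ((x.toReal : ℝ) : EReal) := by
  conv_lhs => rw [← ENNReal.ofReal_toReal hx]
  rw [EReal.coe_ennreal_ofReal, max_eq_left ENNReal.toReal_nonneg]

end ClearingAux

section ClearingMain
open Filter Topology

/-- Theorem 1 (case `μτ_λ < α < μτ_{λ+} < ∞`): the convex combination
`(1−q) τ_λ + q τ_{λ+}` is feasible and optimal. -/
theorem stmt5 {X : Type*} [MeasurableSpace X] (μ : Measure X) [SigmaFinite μ]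
    (ξ : X → ℝ → ℝ)
    (hmeas : ∀ t : ℝ, Measurable fun x => ξ x t)
    (hmono : ∀ x, MonotoneOn (ξ x) (Set.Ici (0 : ℝ)))
    (hrc : ∀ x, ∀ t ∈ Set.Ici (0 : ℝ), ContinuousWithinAt (ξ x) (Set.Ici t) t)
    (T : X → ℝ≥0∞) (hT : Measurable T)
    (hint : (∫⁻ x, (∫⁻ s in {s : ℝ | 0 ≤ s ∧ ENNReal.ofReal s ≤ T x},
        ENNReal.ofReal (-(ξ x s))) ∂μ) < ⊤)
    (α : ℝ) (hα0 : 0 < α) (hαT : ENNReal.ofReal α < ∫⁻ x, T x ∂μ)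
    (lam : ℝ) (τlam τplus : X → ℝ≥0∞)
    (hτlam : ∀ x, τlam x =
      min (sInf (ENNReal.ofReal '' {t : ℝ | 0 ≤ t ∧ lam ≤ ξ x t})) (T x))
    (hτplus : ∀ x, τplus x =
      min (sInf (ENNReal.ofReal '' {t : ℝ | 0 ≤ t ∧ lam < ξ x t})) (T x))
    (h1 : (∫⁻ x, τlam x ∂μ) < ENNReal.ofReal α)
    (h2 : ENNReal.ofReal α < ∫⁻ x, τplus x ∂μ)
    (h3 : (∫⁻ x, τplus x ∂μ) < ⊤)
    (q : ℝ)
    (hq : q = (α - (∫⁻ x, τlam x ∂μ).toReal) /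
      ((∫⁻ x, τplus x ∂μ).toReal - (∫⁻ x, τlam x ∂μ).toReal))
    (σ : X → ℝ≥0∞)
    (hσ : ∀ x, σ x = ENNReal.ofReal (1 - q) * τlam x + ENNReal.ofReal q * τplus x) :
    (∀ᵐ x ∂μ, σ x ≤ T x) ∧ (∫⁻ x, σ x ∂μ) = ENNReal.ofReal α ∧
    ∀ τ : X → ℝ≥0∞, Measurable τ → (∀ᵐ x ∂μ, τ x ≤ T x) →
      (∫⁻ x, τ x ∂μ) = ENNReal.ofReal α →
      clearingObjective μ ξ σ ≤ clearingObjective μ ξ τ := by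
  classical
  -- basic facts about q
  have hI1top : (∫⁻ x, τlam x ∂μ) ≠ ⊤ := ne_top_of_lt h1
  have hI2top : (∫⁻ x, τplus x ∂μ) ≠ ⊤ := h3.ne
  have hAα : (∫⁻ x, τlam x ∂μ).toReal < α := by
    have := (ENNReal.toReal_lt_toReal hI1top ENNReal.ofReal_ne_top).mpr h1
    rwa [ENNReal.toReal_ofReal hα0.le] at this
  have hαB : α < (∫⁻ x, τplus x ∂μ).toReal := by
    have := (ENNReal.toReal_lt_toReal ENNReal.ofReal_ne_top hI2top).mpr h2
    rwa [ENNReal.toReal_ofReal hα0.le] at this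
  have hq0 : 0 < q := by rw [hq]; exact div_pos (by linarith) (by linarith)
  have hq1 : q < 1 := by rw [hq]; rw [div_lt_one (by linarith)]; linarith
  -- monotone / measurable auxiliary data
  have hj : Measurable fun p : X × ℝ => ξ p.1 (max p.2 0) := jointMeas ξ hmeas hrc
  have hmt : ∀ x, Monotone fun s => ξ x (max s 0) := fun x a b hab =>
    hmono x (le_max_right a 0) (le_max_right b 0) (max_le_max hab le_rfl)
  have hτlam_meas : Measurable τlam := by
    have he : τlam = fun x =>
        min (⨅ (r : ℚ), if 0 ≤ (r : ℝ) ∧ lam ≤ ξ x r then ENNReal.ofReal r else ⊤) (T x) := by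
      funext x
      rw [hτlam x, sInf_eq_iInf_rat (ξ x) (hmono x) (fun v => lam ≤ v)
        (fun v w hvw h => h.trans hvw)]
    rw [he]
    refine Measurable.min (Measurable.iInf fun r => ?_) hT
    refine Measurable.ite ?_ measurable_const measurable_const
    exact (MeasurableSet.const _).inter (measurableSet_le measurable_const (hmeas r))
  have hτplus_meas : Measurable τplus := by
    have he : τplus = fun x =>
        min (⨅ (r : ℚ), if 0 ≤ (r : ℝ) ∧ lam < ξ x r then ENNReal.ofReal r else ⊤) (T x) := by
      funext x
      rw [hτplus x, sInf_eq_iInf_rat (ξ x) (hmono x) (fun v => lam < v)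
        (fun v w hvw h => h.trans_le hvw)]
    rw [he]
    refine Measurable.min (Measurable.iInf fun r => ?_) hT
    refine Measurable.ite ?_ measurable_const measurable_const
    exact (MeasurableSet.const _).inter (measurableSet_lt measurable_const (hmeas r))
  have hlp : ∀ x, τlam x ≤ τplus x := by
    intro x
    rw [hτlam x, hτplus x]
    refine min_le_min ?_ le_rfl
    exact sInf_le_sInf (Set.image_mono fun t ht => ⟨ht.1, ht.2.le⟩)
  have hσmeas : Measurable σ := by
    have he : σ = fun x => ENNReal.ofReal (1 - q) * τlam x + ENNReal.ofReal q * τplus x :=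
      funext hσ
    rw [he]
    exact (hτlam_meas.const_mul _).add (hτplus_meas.const_mul _)
  -- part 1
  have hσT : ∀ x, σ x ≤ T x := by
    intro x
    rw [hσ x]
    have h1' : τlam x ≤ T x := by rw [hτlam x]; exact min_le_right _ _
    have h2' : τplus x ≤ T x := by rw [hτplus x]; exact min_le_right _ _
    calc ENNReal.ofReal (1 - q) * τlam x + ENNReal.ofReal q * τplus x
        ≤ ENNReal.ofReal (1 - q) * T x + ENNReal.ofReal q * T x :=
          add_le_add (mul_le_mul_right h1' _) (mul_le_mul_right h2' _)
      _ = (ENNReal.ofReal (1 - q) + ENNReal.ofReal q) * T x := (add_mul _ _ _).symm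
      _ = T x := by
          rw [← ENNReal.ofReal_add (by linarith) hq0.le, sub_add_cancel,
            ENNReal.ofReal_one, one_mul]
  have hσle : ∀ x, σ x ≤ τplus x := by
    intro x
    rw [hσ x]
    calc ENNReal.ofReal (1 - q) * τlam x + ENNReal.ofReal q * τplus x
        ≤ ENNReal.ofReal (1 - q) * τplus x + ENNReal.ofReal q * τplus x :=
          add_le_add (mul_le_mul_right (hlp x) _) le_rfl
      _ = (ENNReal.ofReal (1 - q) + ENNReal.ofReal q) * τplus x := (add_mul _ _ _).symm
      _ = τplus x := by
          rw [← ENNReal.ofReal_add (by linarith) hq0.le, sub_add_cancel,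
            ENNReal.ofReal_one, one_mul]
  have hσge : ∀ x, τlam x ≤ σ x := by
    intro x
    rw [hσ x]
    calc τlam x = (ENNReal.ofReal (1 - q) + ENNReal.ofReal q) * τlam x := by
          rw [← ENNReal.ofReal_add (by linarith) hq0.le, sub_add_cancel,
            ENNReal.ofReal_one, one_mul]
      _ = ENNReal.ofReal (1 - q) * τlam x + ENNReal.ofReal q * τlam x := add_mul _ _ _
      _ ≤ ENNReal.ofReal (1 - q) * τlam x + ENNReal.ofReal q * τplus x :=
          add_le_add le_rfl (mul_le_mul_right (hlp x) _)
  -- part 2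
  have hσint : (∫⁻ x, σ x ∂μ) = ENNReal.ofReal α := by
    have e1 : (∫⁻ x, σ x ∂μ)
        = ∫⁻ x, (ENNReal.ofReal (1 - q) * τlam x + ENNReal.ofReal q * τplus x) ∂μ :=
      lintegral_congr hσ
    rw [e1, lintegral_add_left' (hτlam_meas.const_mul _).aemeasurable,
      lintegral_const_mul' _ _ ENNReal.ofReal_ne_top,
      lintegral_const_mul' _ _ ENNReal.ofReal_ne_top]
    conv_lhs => rw [← ENNReal.ofReal_toReal hI1top, ← ENNReal.ofReal_toReal hI2top]
    rw [← ENNReal.ofReal_mul (by linarith : (0:ℝ) ≤ 1 - q), ← ENNReal.ofReal_mul hq0.le,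
      ← ENNReal.ofReal_add (mul_nonneg (by linarith) ENNReal.toReal_nonneg)
        (mul_nonneg hq0.le ENNReal.toReal_nonneg)]
    congr 1
    have hBA : (∫⁻ x, τplus x ∂μ).toReal - (∫⁻ x, τlam x ∂μ).toReal ≠ 0 := by linarith
    rw [hq]
    field_simp
    ring
  refine ⟨Filter.Eventually.of_forall hσT, hσint, ?_⟩
  -- part 3
  intro τ hτm hτT hτint
  -- rewrite objective via Rset and max-normalized integrand
  have objeq : ∀ τ' : X → ℝ≥0∞, clearingObjective μ ξ τ' =
      ((∫⁻ x, (∫⁻ s in Rset τ' x, ENNReal.ofReal (ξ x (max s 0))) ∂μ : ℝ≥0∞) : EReal) -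
      ((∫⁻ x, (∫⁻ s in Rset τ' x, ENNReal.ofReal (-(ξ x (max s 0)))) ∂μ : ℝ≥0∞) : EReal) := by
    intro τ'
    have e1 : (∫⁻ x, (∫⁻ s in Rset τ' x, ENNReal.ofReal (ξ x s)) ∂μ)
        = ∫⁻ x, (∫⁻ s in Rset τ' x, ENNReal.ofReal (ξ x (max s 0))) ∂μ := by
      refine lintegral_congr fun x => ?_
      refine setLIntegral_congr_fun (Rset_measurableSet τ' x) (fun s hs => ?_)
      rw [max_eq_left hs.1]
    have e2 : (∫⁻ x, (∫⁻ s in Rset τ' x, ENNReal.ofReal (-(ξ x s))) ∂μ)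
        = ∫⁻ x, (∫⁻ s in Rset τ' x, ENNReal.ofReal (-(ξ x (max s 0)))) ∂μ := by
      refine lintegral_congr fun x => ?_
      refine setLIntegral_congr_fun (Rset_measurableSet τ' x) (fun s hs => ?_)
      rw [max_eq_left hs.1]
    show ((∫⁻ x, (∫⁻ s in Rset τ' x, ENNReal.ofReal (ξ x s)) ∂μ : ℝ≥0∞) : EReal) -
      ((∫⁻ x, (∫⁻ s in Rset τ' x, ENNReal.ofReal (-(ξ x s))) ∂μ : ℝ≥0∞) : EReal) = _
    rw [e1, e2]
  -- finiteness of the negative parts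
  have hNfin : ∀ τ' : X → ℝ≥0∞, (∀ᵐ x ∂μ, τ' x ≤ T x) →
      (∫⁻ x, (∫⁻ s in Rset τ' x, ENNReal.ofReal (-(ξ x (max s 0)))) ∂μ) ≠ ⊤ := by
    intro τ' hT'
    refine (lt_of_le_of_lt ?_ hint).ne
    refine lintegral_mono_ae ?_
    filter_upwards [hT'] with x hx
    have e0 : (∫⁻ s in Rset τ' x, ENNReal.ofReal (-(ξ x (max s 0))))
        = ∫⁻ s in Rset τ' x, ENNReal.ofReal (-(ξ x s)) := by
      refine setLIntegral_congr_fun (Rset_measurableSet τ' x) (fun s hs => ?_)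
      rw [max_eq_left hs.1]
    rw [e0]
    refine lintegral_mono_set fun s hs => ?_
    exact ⟨hs.1, (hs.2.trans_le hx).le⟩
  have hNσfin := hNfin σ (Filter.Eventually.of_forall hσT)
  have hNτfin := hNfin τ hτT
  -- finiteness of the λ-shifted negative parts
  have hNlfin : ∀ τ' : X → ℝ≥0∞, Measurable τ' → (∫⁻ x, τ' x ∂μ) = ENNReal.ofReal α →
      (∫⁻ x, (∫⁻ s in Rset τ' x, ENNReal.ofReal (-(ξ x (max s 0)))) ∂μ) ≠ ⊤ →
      (∫⁻ x, (∫⁻ s in Rset τ' x, ENNReal.ofReal (lam - ξ x (max s 0))) ∂μ) ≠ ⊤ := by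
    intro τ' hτ'm hτ'int hN'
    have hfin : ∀ᵐ x ∂μ, τ' x < ⊤ :=
      ae_lt_top hτ'm (by rw [hτ'int]; exact ENNReal.ofReal_ne_top)
    have hbd : (∫⁻ x, (∫⁻ s in Rset τ' x, ENNReal.ofReal (lam - ξ x (max s 0))) ∂μ)
        ≤ (∫⁻ x, (∫⁻ s in Rset τ' x, ENNReal.ofReal (-(ξ x (max s 0)))) ∂μ)
          + ENNReal.ofReal |lam| * ENNReal.ofReal α := by
      have hstep : (∫⁻ x, (∫⁻ s in Rset τ' x, ENNReal.ofReal (lam - ξ x (max s 0))) ∂μ)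
          ≤ ∫⁻ x, ((∫⁻ s in Rset τ' x, ENNReal.ofReal (-(ξ x (max s 0))))
              + ENNReal.ofReal |lam| * τ' x) ∂μ := by
        refine lintegral_mono_ae ?_
        filter_upwards [hfin] with x hx
        calc (∫⁻ s in Rset τ' x, ENNReal.ofReal (lam - ξ x (max s 0)))
            ≤ ∫⁻ s in Rset τ' x,
                (ENNReal.ofReal (-(ξ x (max s 0))) + ENNReal.ofReal |lam|) := by
              refine lintegral_mono fun s => ?_
              refine le_trans (ENNReal.ofReal_le_ofReal
                (by linarith [le_abs_self lam] : lam - ξ x (max s 0) ≤ -(ξ x (max s 0)) + |lam|)) ?_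
              exact ENNReal.ofReal_add_le
          _ = (∫⁻ s in Rset τ' x, ENNReal.ofReal (-(ξ x (max s 0))))
              + ENNReal.ofReal |lam| * τ' x := by
              rw [lintegral_add_right _ measurable_const, setLIntegral_const, Rset_vol hx.ne]
      refine hstep.trans ?_
      have mN := inner_meas ξ hj hτ'm (fun v => ENNReal.ofReal (-v))
        (measurable_id.neg.ennreal_ofReal)
      rw [lintegral_add_left' mN.aemeasurable,
        lintegral_const_mul' _ _ ENNReal.ofReal_ne_top, hτ'int]
    refine (lt_of_le_of_lt hbd ?_).ne
    exact lt_top_iff_ne_top.mpr (ENNReal.add_ne_top.mpr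
      ⟨hN', ENNReal.mul_ne_top ENNReal.ofReal_ne_top ENNReal.ofReal_ne_top⟩)
  have hNlsigfin := hNlfin σ hσmeas hσint hNσfin
  have hNltaufin := hNlfin τ hτm hτint hNτfin
  -- the positive λ-shifted part of σ vanishes
  have hPlsig0 : (∫⁻ x, (∫⁻ s in Rset σ x, ENNReal.ofReal (ξ x (max s 0) - lam)) ∂μ) = 0 := by
    have hz : ∀ x, (∫⁻ s in Rset σ x, ENNReal.ofReal (ξ x (max s 0) - lam)) = 0 := by
      intro x
      have he : (∫⁻ s in Rset σ x, ENNReal.ofReal (ξ x (max s 0) - lam))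
          = ∫⁻ s in Rset σ x, (0 : ℝ≥0∞) := by
        refine setLIntegral_congr_fun (Rset_measurableSet σ x) (fun s hs => ?_)
        have hplusA : τplus x ≤ sInf (ENNReal.ofReal '' {t : ℝ | 0 ≤ t ∧ lam < ξ x t}) := by
          rw [hτplus x]; exact min_le_left _ _
        have hlt : ENNReal.ofReal s < sInf (ENNReal.ofReal '' {t : ℝ | 0 ≤ t ∧ lam < ξ x t}) :=
          lt_of_lt_of_le hs.2 ((hσle x).trans hplusA)
        have hle : ξ x s ≤ lam := le_of_lt_sInf (ξ x) lam s hs.1 hlt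
        rw [max_eq_left hs.1]
        exact ENNReal.ofReal_eq_zero.mpr (by linarith)
      rw [he, lintegral_zero]
    calc (∫⁻ x, (∫⁻ s in Rset σ x, ENNReal.ofReal (ξ x (max s 0) - lam)) ∂μ)
        = ∫⁻ x, (0 : ℝ≥0∞) ∂μ := lintegral_congr hz
      _ = 0 := lintegral_zero
  -- monotonicity of λ-shifted negative parts
  have hNlmono : (∫⁻ x, (∫⁻ s in Rset τ x, ENNReal.ofReal (lam - ξ x (max s 0))) ∂μ)
      ≤ ∫⁻ x, (∫⁻ s in Rset σ x, ENNReal.ofReal (lam - ξ x (max s 0))) ∂μ := by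
    refine lintegral_mono_ae ?_
    filter_upwards [hτT] with x hx
    have hzero : (∫⁻ s in Rset τ x \ Rset σ x, ENNReal.ofReal (lam - ξ x (max s 0))) = 0 := by
      have he : (∫⁻ s in Rset τ x \ Rset σ x, ENNReal.ofReal (lam - ξ x (max s 0)))
          = ∫⁻ s in Rset τ x \ Rset σ x, (0 : ℝ≥0∞) := by
        refine setLIntegral_congr_fun
          ((Rset_measurableSet τ x).diff (Rset_measurableSet σ x)) (fun s hs => ?_)
        obtain ⟨⟨hs0, hsτ⟩, hns⟩ := hs
        have hσs : σ x ≤ ENNReal.ofReal s := by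
          by_contra hcon
          exact hns ⟨hs0, not_le.mp hcon⟩
        have hmin : min (sInf (ENNReal.ofReal '' {t : ℝ | 0 ≤ t ∧ lam ≤ ξ x t})) (T x)
            ≤ ENNReal.ofReal s := by
          rw [← hτlam x]; exact (hσge x).trans hσs
        rcases min_le_iff.mp hmin with hg | hTs
        · have hlam : lam ≤ ξ x s := ge_of_sInf_le (ξ x) (hmono x) (hrc x) lam s hs0 hg
          rw [max_eq_left hs0]
          exact ENNReal.ofReal_eq_zero.mpr (by linarith)
        · exact absurd (lt_of_lt_of_le hsτ hx) (not_lt.mpr hTs)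
      rw [he, lintegral_zero]
    calc (∫⁻ s in Rset τ x, ENNReal.ofReal (lam - ξ x (max s 0)))
        ≤ ∫⁻ s in Rset σ x ∪ (Rset τ x \ Rset σ x), ENNReal.ofReal (lam - ξ x (max s 0)) := by
          refine lintegral_mono_set fun s hs => ?_
          by_cases h : s ∈ Rset σ x
          · exact Set.mem_union_left _ h
          · exact Set.mem_union_right _ ⟨hs, h⟩
      _ ≤ (∫⁻ s in Rset σ x, ENNReal.ofReal (lam - ξ x (max s 0)))
          + ∫⁻ s in Rset τ x \ Rset σ x, ENNReal.ofReal (lam - ξ x (max s 0)) :=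
          lintegral_union_le _ _ _
      _ = ∫⁻ s in Rset σ x, ENNReal.ofReal (lam - ξ x (max s 0)) := by rw [hzero, add_zero]
  -- the two master equations
  have Eσ := eqE μ ξ hj hmt lam hσmeas α hσint
  have Eτ := eqE μ ξ hj hmt lam hτm α hτint
  rw [hPlsig0, add_zero] at Eσ
  set Pσ := ∫⁻ x, (∫⁻ s in Rset σ x, ENNReal.ofReal (ξ x (max s 0))) ∂μ with hPσdef
  set Nσ := ∫⁻ x, (∫⁻ s in Rset σ x, ENNReal.ofReal (-(ξ x (max s 0)))) ∂μ with hNσdef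
  set Nlsig := ∫⁻ x, (∫⁻ s in Rset σ x, ENNReal.ofReal (lam - ξ x (max s 0))) ∂μ with hNlsigdef
  set Pτ := ∫⁻ x, (∫⁻ s in Rset τ x, ENNReal.ofReal (ξ x (max s 0))) ∂μ with hPτdef
  set Nτ := ∫⁻ x, (∫⁻ s in Rset τ x, ENNReal.ofReal (-(ξ x (max s 0)))) ∂μ with hNτdef
  set Nltau := ∫⁻ x, (∫⁻ s in Rset τ x, ENNReal.ofReal (lam - ξ x (max s 0))) ∂μ with hNltaudef
  set Pltau := ∫⁻ x, (∫⁻ s in Rset τ x, ENNReal.ofReal (ξ x (max s 0) - lam)) ∂μ with hPltaudef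
  set cm := ENNReal.ofReal (-lam) * ENNReal.ofReal α with hcmdef
  set cp := ENNReal.ofReal lam * ENNReal.ofReal α with hcpdef
  have hcmfin : cm ≠ ⊤ := ENNReal.mul_ne_top ENNReal.ofReal_ne_top ENNReal.ofReal_ne_top
  have hcpfin : cp ≠ ⊤ := ENNReal.mul_ne_top ENNReal.ofReal_ne_top ENNReal.ofReal_ne_top
  rw [objeq σ, objeq τ, ← hPσdef, ← hNσdef, ← hPτdef, ← hNτdef]
  rcases eq_or_ne Pτ ⊤ with hPτtop | hPτfin
  · rw [hPτtop, coe_ennreal_fin Nτ hNτfin, EReal.coe_ennreal_top, EReal.top_sub_coe]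
    exact le_top
  · have hPltaufin : Pltau ≠ ⊤ := by
      have hsum : Pτ + Nltau + cm ≠ ⊤ :=
        ENNReal.add_ne_top.mpr ⟨ENNReal.add_ne_top.mpr ⟨hPτfin, hNltaufin⟩, hcmfin⟩
      rw [Eτ] at hsum
      intro h
      exact hsum (by rw [h]; simp)
    have hPσfin : Pσ ≠ ⊤ := by
      have hsum : Pσ + Nlsig + cm ≠ ⊤ := by
        rw [Eσ]; exact ENNReal.add_ne_top.mpr ⟨hNσfin, hcpfin⟩
      intro h
      exact hsum (by rw [h]; simp)
    have key : Pσ + Nτ ≤ Pτ + Nσ := by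
      have hK : Nlsig + cm ≠ ⊤ := ENNReal.add_ne_top.mpr ⟨hNlsigfin, hcmfin⟩
      have h4 : Pσ + Nτ + (Nlsig + cm) = Nσ + cp + Nτ := by
        calc Pσ + Nτ + (Nlsig + cm) = Pσ + Nlsig + cm + Nτ := by ring
          _ = Nσ + cp + Nτ := by rw [Eσ]
      have h5 : Nσ + cp + Nτ ≤ Pτ + Nσ + (Nlsig + cm) := by
        calc Nσ + cp + Nτ ≤ Nσ + cp + Nτ + Pltau := le_self_add
          _ = Nτ + Pltau + cp + Nσ := by ring
          _ = Pτ + Nltau + cm + Nσ := by rw [← Eτ]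
          _ ≤ Pτ + Nlsig + cm + Nσ := by
              exact add_le_add (add_le_add (add_le_add le_rfl hNlmono) le_rfl) le_rfl
          _ = Pτ + Nσ + (Nlsig + cm) := by ring
      have h6 : Pσ + Nτ + (Nlsig + cm) ≤ Pτ + Nσ + (Nlsig + cm) := h4 ▸ h5
      exact (ENNReal.add_le_add_iff_right hK).mp h6
    -- transfer to EReal
    rw [coe_ennreal_fin Pσ hPσfin, coe_ennreal_fin Nσ hNσfin,
      coe_ennreal_fin Pτ hPτfin, coe_ennreal_fin Nτ hNτfin,
      ← EReal.coe_sub, ← EReal.coe_sub, EReal.coe_le_coe_iff]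
    have hkey' : (Pσ + Nτ).toReal ≤ (Pτ + Nσ).toReal :=
      ENNReal.toReal_mono (ENNReal.add_ne_top.mpr ⟨hPτfin, hNσfin⟩) key
    rw [ENNReal.toReal_add hPσfin hNτfin, ENNReal.toReal_add hPτfin hNσfin] at hkey'
    linarith

end ClearingMain
end

section
/- Let ψ:[0,∞)→ℝ be strictly convex and continuous, and let T be a nonnegative random variable with finite positive mean and distribution F. Define the equilibrium distribution F_e(t) = (1/ET)∫_0^t(1−F(s))ds. Then for every p∈(0,1), the random variable τ_p = F_e^{-1}(p) ∧ T minimizes Eψ(τ) over all random variables τ with τ∈[0,T] a.s. and Eτ = p·ET. -/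
open Set MeasureTheory ProbabilityTheory
open scoped ENNReal

/-- The (possibly infinite) expectation `E[ψ(τ)]` as an extended real. -/
noncomputable def eExp {Ω : Type*} [MeasurableSpace Ω] (P : Measure Ω)
    (f : Ω → ℝ) : EReal :=
  ((∫⁻ ω, ENNReal.ofReal (f ω) ∂P : ℝ≥0∞) : EReal) -
  ((∫⁻ ω, ENNReal.ofReal (-(f ω)) ∂P : ℝ≥0∞) : EReal)

lemma ereal_coe_of_ne_top {x : ℝ≥0∞} (hx : x ≠ ⊤) : (x : EReal) = ((x.toReal : ℝ) : EReal) := by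
  conv_lhs => rw [← ENNReal.ofReal_toReal hx]
  rw [EReal.coe_ennreal_ofReal, max_eq_left ENNReal.toReal_nonneg]

lemma eExp_congr {Ω : Type*} [MeasurableSpace Ω] {P : Measure Ω} {f g : Ω → ℝ}
    (h : f =ᵐ[P] g) : eExp P f = eExp P g := by
  unfold eExp
  have e1 : ∫⁻ ω, ENNReal.ofReal (f ω) ∂P = ∫⁻ ω, ENNReal.ofReal (g ω) ∂P :=
    lintegral_congr_ae (h.mono fun ω hω => by simp only [hω])
  have e2 : ∫⁻ ω, ENNReal.ofReal (-(f ω)) ∂P = ∫⁻ ω, ENNReal.ofReal (-(g ω)) ∂P :=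
    lintegral_congr_ae (h.mono fun ω hω => by simp only [hω])
  rw [e1, e2]

lemma eExp_eq_integral {Ω : Type*} [MeasurableSpace Ω] {P : Measure Ω} {f : Ω → ℝ}
    (hf : Integrable f P) : eExp P f = ((∫ ω, f ω ∂P : ℝ) : EReal) := by
  have h1 : ∫⁻ ω, ENNReal.ofReal (f ω) ∂P ≠ ⊤ := by
    refine (lt_of_le_of_lt (lintegral_mono fun ω => ?_) hf.2).ne
    exact Real.ofReal_le_enorm _
  have h2 : ∫⁻ ω, ENNReal.ofReal (-(f ω)) ∂P ≠ ⊤ := by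
    refine (lt_of_le_of_lt (lintegral_mono fun ω => ?_) hf.2).ne
    rw [← enorm_neg]
    exact Real.ofReal_le_enorm _
  unfold eExp
  rw [ereal_coe_of_ne_top h1, ereal_coe_of_ne_top h2,
    integral_eq_lintegral_pos_part_sub_lintegral_neg_part hf]
  exact (EReal.coe_sub _ _).symm

lemma exists_subgrad {ψ : ℝ → ℝ} (hψ : ConvexOn ℝ (Set.Ici (0:ℝ)) ψ) {c : ℝ} (hc : 0 < c) :
    ∃ s : ℝ, (∀ x, 0 ≤ x → ψ c + s * (x - c) ≤ ψ x) ∧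
      (∀ x y, 0 ≤ x → x ≤ y → y ≤ c → ψ y + s * (x - y) ≤ ψ x) := by
  set S : Set ℝ := (fun x => (ψ c - ψ x) / (c - x)) '' (Ico 0 c) with hS
  have hne : S.Nonempty := ⟨_, ⟨0, ⟨le_refl _, hc⟩, rfl⟩⟩
  have hbdd : BddAbove S := by
    refine ⟨(ψ (c+1) - ψ c) / (c + 1 - c), ?_⟩
    rintro z ⟨x, hx, rfl⟩
    exact hψ.slope_mono_adjacent hx.1 (by simp; linarith : (c+1) ∈ Ici (0:ℝ)) hx.2 (by linarith)
  set s := sSup S with hsdef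
  have key1 : ∀ x, 0 ≤ x → x < c → (ψ c - ψ x) / (c - x) ≤ s :=
    fun x h0 hxc => le_csSup hbdd ⟨x, ⟨h0, hxc⟩, rfl⟩
  have key2 : ∀ y, c < y → s ≤ (ψ y - ψ c) / (y - c) := by
    intro y hy
    refine csSup_le hne ?_
    rintro z ⟨x, hx, rfl⟩
    exact hψ.slope_mono_adjacent hx.1 (le_trans hc.le hy.le) hx.2 hy
  have main : ∀ x, 0 ≤ x → ψ c + s * (x - c) ≤ ψ x := by
    intro x h0
    rcases lt_trichotomy x c with h | h | h
    · have := key1 x h0 h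
      rw [div_le_iff₀ (by linarith)] at this
      nlinarith
    · simp [h]
    · have := key2 x h
      rw [le_div_iff₀ (by linarith)] at this
      nlinarith
  refine ⟨s, main, ?_⟩
  intro x y h0 hxy hyc
  rcases eq_or_lt_of_le hxy with rfl | hxy
  · simp
  rcases eq_or_lt_of_le hyc with rfl | hyc
  · exact main x h0
  have h1 : (ψ y - ψ x) / (y - x) ≤ (ψ c - ψ y) / (c - y) :=
    hψ.slope_mono_adjacent h0 (le_trans h0 (hxy.le.trans hyc.le)) hxy hyc
  have h2 := key1 y (le_trans h0 hxy.le) hyc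
  have := h1.trans h2
  rw [div_le_iff₀ (by linarith)] at this
  nlinarith


/-- Corollary (deterministic convex function): `τ_p = F_e^{-1}(p) ∧ T` minimizes
`E ψ(τ)` subject to `τ ∈ [0,T]` a.s. and `Eτ = p ET`. -/
theorem stmt10 {Ω : Type*} [MeasureSpace Ω] [IsProbabilityMeasure (ℙ : Measure Ω)]
    (ψ : ℝ → ℝ) (hψ : StrictConvexOn ℝ (Set.Ici (0 : ℝ)) ψ)
    (hψc : ContinuousOn ψ (Set.Ici (0 : ℝ)))
    (T : Ω → ℝ) (hTm : Measurable T) (hT0 : ∀ᵐ ω, 0 ≤ T ω)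
    (hTint : Integrable T) (hTpos : 0 < ∫ ω, T ω)
    (F : ℝ → ℝ) (hF : ∀ t, F t = (ℙ {ω | T ω ≤ t}).toReal)
    (Fe : ℝ → ℝ) (hFe : ∀ t, Fe t = (∫ ω, T ω)⁻¹ * ∫ s in (0 : ℝ)..t, (1 - F s))
    (p : ℝ) (hp : p ∈ Set.Ioo (0 : ℝ) 1)
    (c : ℝ) (hc : c = sInf {t : ℝ | 0 ≤ t ∧ p ≤ Fe t})
    (τp : Ω → ℝ) (hτp : ∀ ω, τp ω = min c (T ω)) :
    ∀ τ : Ω → ℝ, Measurable τ → (∀ᵐ ω, 0 ≤ τ ω ∧ τ ω ≤ T ω) →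
      Integrable τ → (∫ ω, τ ω) = p * ∫ ω, T ω →
      eExp ℙ (fun ω => ψ (τp ω)) ≤ eExp ℙ (fun ω => ψ (τ ω)) := by
  intro τ hτm hτ01 hτint hτmean
  obtain ⟨hp0, hp1⟩ := hp
  have hETne : (∫ ω, T ω) ≠ 0 := ne_of_gt hTpos
  -- the tail probability function G
  set G : ℝ → ℝ≥0∞ := fun t => ℙ {ω | t < T ω} with hG
  have hGmeas : Measurable G :=
    Antitone.measurable (fun s t hst => measure_mono (fun ω h => lt_of_le_of_lt hst h))
  have hGle1 : ∀ t, G t ≤ 1 := fun t => prob_le_one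
  have hGF : ∀ s, (G s).toReal = 1 - F s := by
    intro s
    have hcompl : {ω | s < T ω} = {ω | T ω ≤ s}ᶜ := by ext ω; simp [not_le]
    have hms : MeasurableSet {ω | T ω ≤ s} := hTm measurableSet_Iic
    rw [hF s, hG]
    simp only
    rw [hcompl, measure_compl hms (measure_ne_top _ _), measure_univ,
      ENNReal.toReal_sub_of_le prob_le_one ENNReal.one_ne_top, ENNReal.toReal_one]
  -- layer cake for T
  set L : ℝ≥0∞ := ∫⁻ ω, ENNReal.ofReal (T ω) ∂ℙ with hL
  have hlayerT : L = ∫⁻ t in Ioi (0:ℝ), G t :=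
    lintegral_eq_lintegral_meas_lt ℙ hT0 hTm.aemeasurable
  have hLne : L ≠ ⊤ := hTint.lintegral_lt_top.ne
  have hLReal : L.toReal = ∫ ω, T ω :=
    (integral_eq_lintegral_of_nonneg_ae hT0 hTm.aestronglyMeasurable).symm
  have hIoc_le : ∀ t : ℝ, ∫⁻ s in Ioc 0 t, G s ≤ L := by
    intro t
    rw [hlayerT]
    exact lintegral_mono_set Ioc_subset_Ioi_self
  -- Fe in terms of G
  have hFeG : ∀ t, 0 ≤ t → Fe t = (∫ ω, T ω)⁻¹ * (∫⁻ s in Ioc 0 t, G s).toReal := by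
    intro t ht
    rw [hFe t, intervalIntegral.integral_of_le ht]
    congr 1
    have : ∀ s, (1 - F s) = (G s).toReal := fun s => (hGF s).symm
    simp_rw [this]
    rw [integral_toReal (hGmeas.aemeasurable.restrict)
      (Filter.Eventually.of_forall fun s => lt_of_le_of_lt (hGle1 s) ENNReal.one_lt_top)]
  -- Fe is monotone on [0,∞)
  have hFeMono : ∀ a b : ℝ, 0 ≤ a → a ≤ b → Fe a ≤ Fe b := by
    intro a b ha hab
    rw [hFeG a ha, hFeG b (ha.trans hab)]
    refine mul_le_mul_of_nonneg_left ?_ (inv_nonneg.mpr hTpos.le)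
    exact ENNReal.toReal_mono ((hIoc_le b).trans_lt hLne.lt_top).ne
      (lintegral_mono_set (Ioc_subset_Ioc_right hab))
  -- the set S is nonempty
  have hSne : Set.Nonempty {t : ℝ | 0 ≤ t ∧ p ≤ Fe t} := by
    have hsup : ∫⁻ t in Ioi (0:ℝ), G t = ⨆ n : ℕ, ∫⁻ t in Ioc (0:ℝ) (n:ℝ), G t := by
      have hmono : Monotone fun n : ℕ => (Ioc (0:ℝ) (n:ℝ)).indicator G := by
        intro m n hmn
        exact Set.indicator_le_indicator_of_subset
          (Ioc_subset_Ioc_right (by exact_mod_cast hmn)) (fun _ => zero_le)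
      have hpt : ∀ t, (Ioi (0:ℝ)).indicator G t = ⨆ n : ℕ, (Ioc (0:ℝ) (n:ℝ)).indicator G t := by
        intro t
        rcases le_or_gt t 0 with h | h
        · rw [Set.indicator_of_notMem (by simpa using h)]
          symm
          simp only [ENNReal.iSup_eq_zero]
          intro n
          exact Set.indicator_of_notMem (fun hm => absurd hm.1 (not_lt.mpr h)) _
        · obtain ⟨n, hn⟩ := exists_nat_ge t
          rw [Set.indicator_of_mem (show t ∈ Ioi (0:ℝ) from h)]
          refine le_antisymm (le_iSup_of_le n ?_) (iSup_le fun m => Set.indicator_le_self _ _ t)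
          rw [Set.indicator_of_mem (s := Ioc (0:ℝ) (n:ℝ)) (show t ∈ Ioc (0:ℝ) (n:ℝ) from ⟨h, hn⟩) G]
      calc ∫⁻ t in Ioi (0:ℝ), G t = ∫⁻ t, (Ioi (0:ℝ)).indicator G t :=
            (lintegral_indicator measurableSet_Ioi G).symm
      _ = ∫⁻ t, ⨆ n : ℕ, (Ioc (0:ℝ) (n:ℝ)).indicator G t := by simp_rw [hpt]
      _ = ⨆ n : ℕ, ∫⁻ t, (Ioc (0:ℝ) (n:ℝ)).indicator G t :=
            lintegral_iSup (fun n => hGmeas.indicator measurableSet_Ioc) hmono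
      _ = ⨆ n : ℕ, ∫⁻ t in Ioc (0:ℝ) (n:ℝ), G t := by
            simp_rw [lintegral_indicator measurableSet_Ioc G]
    have hL0 : L ≠ 0 := by
      intro h0
      rw [h0] at hLReal
      simp at hLReal
      exact hETne hLReal.symm
    have hplt1 : ENNReal.ofReal p < 1 := by
      rw [← ENNReal.ofReal_one]
      exact (ENNReal.ofReal_lt_ofReal_iff_of_nonneg hp0.le).mpr hp1
    have hpL : ENNReal.ofReal p * L < L := by
      have h := ENNReal.mul_lt_mul_left hL0 hLne hplt1
      rwa [one_mul] at h
    have hpL2 : ENNReal.ofReal p * L < ⨆ n : ℕ, ∫⁻ t in Ioc (0:ℝ) (n:ℝ), G t := by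
      rw [← hsup, ← hlayerT]; exact hpL
    obtain ⟨n, hn⟩ := lt_iSup_iff.mp hpL2
    refine ⟨(n : ℝ), Nat.cast_nonneg n, ?_⟩
    rw [hFeG _ (Nat.cast_nonneg n)]
    have h1 : (ENNReal.ofReal p * L).toReal ≤ (∫⁻ t in Ioc (0:ℝ) (n:ℝ), G t).toReal :=
      ENNReal.toReal_mono ((hIoc_le _).trans_lt hLne.lt_top).ne hn.le
    rw [ENNReal.toReal_mul, ENNReal.toReal_ofReal hp0.le, hLReal] at h1
    calc p = (∫ ω, T ω)⁻¹ * (p * ∫ ω, T ω) := by field_simp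
    _ ≤ _ := mul_le_mul_of_nonneg_left h1 (inv_nonneg.mpr hTpos.le)
  have hbddb : BddBelow {t : ℝ | 0 ≤ t ∧ p ≤ Fe t} := ⟨0, fun t ht => ht.1⟩
  -- c > 0
  have hlb : ∀ t ∈ {t : ℝ | 0 ≤ t ∧ p ≤ Fe t}, p * (∫ ω, T ω) ≤ t := by
    intro t ht
    have h1 : Fe t ≤ (∫ ω, T ω)⁻¹ * t := by
      rw [hFeG t ht.1]
      refine mul_le_mul_of_nonneg_left ?_ (inv_nonneg.mpr hTpos.le)
      have : ∫⁻ s in Ioc 0 t, G s ≤ ENNReal.ofReal t := by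
        calc ∫⁻ s in Ioc 0 t, G s ≤ ∫⁻ _ in Ioc 0 t, 1 := lintegral_mono fun s => hGle1 s
        _ = volume (Ioc (0:ℝ) t) := by simp
        _ = ENNReal.ofReal t := by rw [Real.volume_Ioc, sub_zero]
      calc (∫⁻ s in Ioc 0 t, G s).toReal ≤ (ENNReal.ofReal t).toReal :=
            ENNReal.toReal_mono ENNReal.ofReal_ne_top this
      _ = t := ENNReal.toReal_ofReal ht.1
    have h2 : p ≤ (∫ ω, T ω)⁻¹ * t := le_trans ht.2 h1
    rw [inv_mul_eq_div, le_div_iff₀ hTpos] at h2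
    linarith [h2]
  have hcpos : 0 < c := by
    rw [hc]
    exact lt_of_lt_of_le (mul_pos hp0 hTpos) (le_csInf hSne hlb)
  -- continuity of Fe
  have hFint : ∀ a b : ℝ, IntervalIntegrable (fun s => 1 - F s) volume a b := by
    intro a b
    have hFmono : Monotone F := by
      intro x y hxy
      rw [hF x, hF y]
      exact ENNReal.toReal_mono (measure_ne_top _ _)
        (measure_mono fun ω (h : T ω ≤ x) => h.trans hxy)
    have hmeas : Measurable fun s => 1 - F s := measurable_const.sub hFmono.measurable
    have hbound : ∀ s, ‖1 - F s‖ ≤ 1 := by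
      intro s
      have h0 : 0 ≤ F s := by rw [hF s]; exact ENNReal.toReal_nonneg
      have h1 : F s ≤ 1 := by
        rw [hF s]
        calc (ℙ {ω | T ω ≤ s}).toReal ≤ (1 : ℝ≥0∞).toReal :=
          ENNReal.toReal_mono ENNReal.one_ne_top prob_le_one
        _ = 1 := ENNReal.toReal_one
      rw [Real.norm_eq_abs, abs_le]; constructor <;> linarith
    constructor <;>
      exact ⟨hmeas.aestronglyMeasurable.restrict,
        HasFiniteIntegral.restrict_of_bounded (C := 1) measure_Ioc_lt_top
          (Filter.Eventually.of_forall hbound)⟩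
  have hFecont : Continuous Fe := by
    have hfe : Fe = fun t => (∫ ω, T ω)⁻¹ * ∫ s in (0:ℝ)..t, (1 - F s) := funext hFe
    rw [hfe]
    exact continuous_const.mul (intervalIntegral.continuous_primitive hFint 0)
  -- Fe c = p
  have hFec : Fe c = p := by
    refine le_antisymm ?_ ?_
    · have hsub : Ico (0:ℝ) c ⊆ {t | Fe t ≤ p} := by
        intro t ht
        by_contra hcon
        simp only [mem_setOf_eq, not_le] at hcon
        have : t ∈ {t : ℝ | 0 ≤ t ∧ p ≤ Fe t} := ⟨ht.1, hcon.le⟩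
        exact absurd (hc ▸ csInf_le hbddb this) (not_le.mpr ht.2)
      have hcc : c ∈ closure (Ico (0:ℝ) c) := by
        rw [closure_Ico hcpos.ne]
        exact ⟨hcpos.le, le_refl c⟩
      exact closure_minimal hsub (isClosed_le hFecont continuous_const) hcc
    · have hsub : {t : ℝ | 0 ≤ t ∧ p ≤ Fe t} ⊆ {t | p ≤ Fe t} := fun t ht => ht.2
      have hcc : c ∈ closure {t : ℝ | 0 ≤ t ∧ p ≤ Fe t} := hc ▸ csInf_mem_closure hSne hbddb
      exact closure_minimal hsub (isClosed_le continuous_const hFecont) hcc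
  have hIoc_c : (∫⁻ s in Ioc 0 c, G s).toReal = p * ∫ ω, T ω := by
    have h1 := hFeG c hcpos.le
    rw [hFec] at h1
    rw [inv_mul_eq_div, eq_div_iff hETne] at h1
    linarith [h1]
  -- τp properties
  have hτpfun : τp = fun ω => min c (T ω) := funext hτp
  have hτpm : Measurable τp := by rw [hτpfun]; exact measurable_const.min hTm
  have hτp0 : ∀ᵐ ω, 0 ≤ τp ω := hT0.mono fun ω h => by rw [hτp ω]; exact le_min hcpos.le h
  have hτpc : ∀ ω, τp ω ≤ c := fun ω => hτp ω ▸ min_le_left _ _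
  have hτpint : Integrable τp :=
    ⟨hτpm.aestronglyMeasurable, HasFiniteIntegral.of_bounded (C := c)
      (hτp0.mono fun ω h0 => by rw [Real.norm_eq_abs, abs_of_nonneg h0]; exact hτpc ω)⟩
  -- E τp = p E T
  have hτpmean : ∫ ω, τp ω = p * ∫ ω, T ω := by
    rw [integral_eq_lintegral_of_nonneg_ae hτp0 hτpm.aestronglyMeasurable]
    have hlayer2 : ∫⁻ ω, ENNReal.ofReal (τp ω) ∂ℙ = ∫⁻ t in Ioi (0:ℝ), ℙ {ω | t < τp ω} :=
      lintegral_eq_lintegral_meas_lt ℙ hτp0 hτpm.aemeasurable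
    have hcong : ∫⁻ t in Ioi (0:ℝ), ℙ {ω | t < τp ω}
        = ∫⁻ t in Ioi (0:ℝ), (Ioo (0:ℝ) c).indicator G t := by
      refine setLIntegral_congr_fun measurableSet_Ioi
        (fun t ht => ?_)
      rcases lt_or_ge t c with hlt | hge
      · have hset : {ω | t < τp ω} = {ω | t < T ω} := by
          ext ω
          simp [hτp ω, lt_min_iff, hlt]
        rw [hset, Set.indicator_of_mem (s := Ioo (0:ℝ) c) (show t ∈ Ioo (0:ℝ) c from ⟨ht, hlt⟩) G]
      · have hset : {ω | t < τp ω} = (∅ : Set Ω) := by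
          ext ω
          simp only [mem_setOf_eq, mem_empty_iff_false, iff_false, not_lt, hτp ω]
          exact le_trans (min_le_left _ _) hge
        rw [hset, Set.indicator_of_notMem (fun hm => absurd hm.2 (not_lt.mpr hge))]
        simp
    have hind : ∫⁻ t in Ioi (0:ℝ), (Ioo (0:ℝ) c).indicator G t = ∫⁻ t in Ioo (0:ℝ) c, G t := by
      rw [lintegral_indicator measurableSet_Ioo, Measure.restrict_restrict measurableSet_Ioo,
        Set.inter_eq_self_of_subset_left Ioo_subset_Ioi_self]
    have hooc : ∫⁻ t in Ioo (0:ℝ) c, G t = ∫⁻ t in Ioc (0:ℝ) c, G t :=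
      setLIntegral_congr Ioo_ae_eq_Ioc
    rw [hlayer2, hcong, hind, hooc, hIoc_c]
  -- the truncated ψ
  set φ : ℝ → ℝ := fun x => ψ (max x 0) with hφ
  have hφc : Continuous φ :=
    hψc.comp_continuous (continuous_id.max continuous_const) (fun x => mem_Ici.mpr (le_max_right _ _))
  have hφeq : ∀ x : ℝ, 0 ≤ x → φ x = ψ x := fun x hx => by rw [hφ]; simp [max_eq_left hx]
  have hφconv : ConvexOn ℝ (Ici (0:ℝ)) φ := by
    refine ⟨convex_Ici 0, ?_⟩
    intro x hx y hy a b ha hb hab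
    have hxy : a • x + b • y ∈ Ici (0:ℝ) := (convex_Ici 0) hx hy ha hb hab
    rw [hφeq _ hxy, hφeq _ hx, hφeq _ hy]
    exact hψ.convexOn.2 hx hy ha hb hab
  obtain ⟨s, hs1, hs2⟩ := exists_subgrad hφconv hcpos
  -- pointwise inequality
  set g : Ω → ℝ := fun ω => φ (τp ω) + s * (τ ω - τp ω) with hgdef
  have hpt : ∀ᵐ ω, g ω ≤ φ (τ ω) := by
    filter_upwards [hT0, hτ01] with ω h0 h01
    rw [hgdef]
    simp only
    rw [hτp ω]
    rcases le_total c (T ω) with hcT | hTc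
    · rw [min_eq_left hcT]
      exact hs1 (τ ω) h01.1
    · rw [min_eq_right hTc]
      exact hs2 (τ ω) (T ω) h01.1 h01.2 hTc
  -- integrability
  obtain ⟨M, hM⟩ :=
    (isCompact_Icc (a := (0:ℝ)) (b := c)).exists_bound_of_continuousOn hφc.continuousOn
  have hφτpint : Integrable (fun ω => φ (τp ω)) :=
    ⟨(hφc.measurable.comp hτpm).aestronglyMeasurable,
      HasFiniteIntegral.of_bounded (C := M)
        (hτp0.mono fun ω h0 => hM _ ⟨h0, hτpc ω⟩)⟩
  have hgint : Integrable g := hφτpint.add ((hτint.sub hτpint).const_mul s)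
  have h2int : Integrable (fun ω => s * (τ ω - τp ω)) := by
    exact (hτint.sub hτpint).const_mul s
  have hgmean : ∫ ω, g ω = ∫ ω, φ (τp ω) := by
    have hsplit : ∫ ω, g ω = (∫ ω, φ (τp ω)) + ∫ ω, s * (τ ω - τp ω) := by
      rw [hgdef]
      exact integral_add hφτpint h2int
    have hsub : ∫ ω, (τ ω - τp ω) = 0 := by
      rw [integral_sub hτint hτpint, hτmean, hτpmean]
      ring
    rw [hsplit, integral_const_mul, hsub, mul_zero, add_zero]
  -- rewrite both sides with φ
  have he1 : eExp ℙ (fun ω => ψ (τp ω)) = eExp ℙ (fun ω => φ (τp ω)) :=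
    eExp_congr (hτp0.mono fun ω h0 => (hφeq _ h0).symm)
  have he2 : eExp ℙ (fun ω => ψ (τ ω)) = eExp ℙ (fun ω => φ (τ ω)) :=
    eExp_congr (hτ01.mono fun ω h => (hφeq _ h.1).symm)
  rw [he1, he2, eExp_eq_integral hφτpint]
  have hBne : ∫⁻ ω, ENNReal.ofReal (-(φ (τ ω))) ∂ℙ ≠ ⊤ := by
    refine (lt_of_le_of_lt (lintegral_mono_ae (hpt.mono fun ω h => ?_)) hgint.2).ne
    calc ENNReal.ofReal (-(φ (τ ω))) ≤ ENNReal.ofReal (-(g ω)) :=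
          ENNReal.ofReal_le_ofReal (by linarith)
    _ ≤ ‖g ω‖ₑ := by rw [← enorm_neg]; exact Real.ofReal_le_enorm _
  by_cases hA : ∫⁻ ω, ENNReal.ofReal (φ (τ ω)) ∂ℙ = ⊤
  · unfold eExp
    rw [hA, ereal_coe_of_ne_top hBne, EReal.coe_ennreal_top, EReal.top_sub_coe]
    exact le_top
  · have hφτint : Integrable (fun ω => φ (τ ω)) := by
      refine ⟨(hφc.measurable.comp hτm).aestronglyMeasurable, ?_⟩
      have hnorm : ∀ y : ℝ, ‖y‖ₑ = ENNReal.ofReal y + ENNReal.ofReal (-y) := by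
        intro y
        rcases le_total 0 y with h | h
        · rw [ENNReal.ofReal_of_nonpos (neg_nonpos.mpr h), add_zero, Real.enorm_eq_ofReal h]
        · rw [ENNReal.ofReal_of_nonpos h, zero_add, ← enorm_neg,
            Real.enorm_eq_ofReal (neg_nonneg.mpr h)]
      have : HasFiniteIntegral (fun ω => φ (τ ω)) ℙ := by
        show (∫⁻ ω, ‖φ (τ ω)‖ₑ ∂ℙ) < ∞
        simp_rw [hnorm]
        have hmf : Measurable fun ω => ENNReal.ofReal (φ (τ ω)) :=
          ENNReal.measurable_ofReal.comp (hφc.measurable.comp hτm)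
        rw [lintegral_add_left hmf]
        exact ENNReal.add_lt_top.mpr ⟨lt_top_iff_ne_top.mpr hA, lt_top_iff_ne_top.mpr hBne⟩
      exact this
    rw [eExp_eq_integral hφτint]
    refine EReal.coe_le_coe_iff.mpr ?_
    rw [← hgmean]
    exact integral_mono_ae hgint hφτint hpt
end

section
/- Let f_1,…,f_n:[0,∞)→ℝ be convex functions with right derivatives ξ_i, let t_i∈[0,∞], a_i∈(0,∞), and α∈(0, Σ a_i t_i). Suppose λ∈ℝ is such that x_i^* := inf{t: ξ_i(t) ≥ a_i λ} ∧ t_i satisfies Σ_{i=1}^n a_i x_i^* = α. Then (x_1^*,…,x_n^*) minimizes Σ_{i=1}^n f_i(x_i) subject to x_i∈[0,t_i] for all i and Σ_{i=1}^n a_i x_i = α. -/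
open Set
open scoped ENNReal

section Aux

variable {f ξ : ℝ → ℝ}

private lemma aux_cont (hconv : ConvexOn ℝ (Set.Ici (0 : ℝ)) f)
    (hd : ∀ s ∈ Set.Ici (0 : ℝ), HasDerivWithinAt f (ξ s) (Set.Ici s) s)
    {u v : ℝ} (hu : 0 ≤ u) : ContinuousOn f (Icc u v) := by
  intro z hz
  rcases eq_or_lt_of_le (hu.trans hz.1) with hz0 | hz0
  · have h := (hd z (by simp [← hz0])).continuousWithinAt
    exact h.mono fun w hw => by
      simp only [mem_Ici, ← hz0]
      exact hu.trans hw.1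
  · have hc := hconv.continuousOn_interior
    rw [interior_Ici] at hc
    exact ((hc z hz0).continuousAt (Ioi_mem_nhds hz0)).continuousWithinAt

private lemma aux_slope_le (hconv : ConvexOn ℝ (Set.Ici (0 : ℝ)) f)
    (hd : ∀ s ∈ Set.Ici (0 : ℝ), HasDerivWithinAt f (ξ s) (Set.Ici s) s)
    {u v : ℝ} (hu : 0 ≤ u) (huv : u < v) : slope f u v ≤ ξ v := by
  have hv : (0 : ℝ) ≤ v := hu.trans huv.le
  have hdv : HasDerivWithinAt f (ξ v) (Ioi v) v := (hd v hv).mono Ioi_subset_Ici_self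
  apply ge_of_tendsto <| (hasDerivWithinAt_iff_tendsto_slope' notMem_Ioi_self).mp hdv
  filter_upwards [self_mem_nhdsWithin] with t (ht : t ∈ Ioi v)
  have ht' : v < t := ht
  have : slope f v u ≤ slope f v t := by
    simpa only [slope_def_field] using
      hconv.secant_mono hv hu (hv.trans ht'.le) huv.ne ht'.ne' (huv.le.trans ht'.le)
  rwa [slope_comm] at this

private lemma aux_mono (hconv : ConvexOn ℝ (Set.Ici (0 : ℝ)) f)
    (hd : ∀ s ∈ Set.Ici (0 : ℝ), HasDerivWithinAt f (ξ s) (Set.Ici s) s)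
    {u v : ℝ} (hu : 0 ≤ u) (huv : u ≤ v) : ξ u ≤ ξ v := by
  rcases eq_or_lt_of_le huv with rfl | h
  · exact le_rfl
  · have h1 : ξ u ≤ slope f u v :=
      hconv.le_slope_of_hasDerivWithinAt_Ioi hu (hu.trans huv) h
        ((hd u hu).mono Ioi_subset_Ici_self)
    exact h1.trans (aux_slope_le hconv hd hu h)

private lemma aux_lower (hconv : ConvexOn ℝ (Set.Ici (0 : ℝ)) f)
    (hd : ∀ s ∈ Set.Ici (0 : ℝ), HasDerivWithinAt f (ξ s) (Set.Ici s) s)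
    {x y L : ℝ} (hx : 0 ≤ x) (hxy : x ≤ y)
    (hL : ∀ s, x ≤ s → s < y → L ≤ ξ s) : f x + L * (y - x) ≤ f y := by
  have key := image_le_of_deriv_right_le_deriv_boundary
    (f := fun z => f x + L * (z - x)) (f' := fun _ => L) (a := x) (b := y)
    (B := f) (B' := ξ)
    (by fun_prop)
    (fun z _ => by
      have : HasDerivAt (fun z => f x + L * (z - x)) L z := by
        simpa using (((hasDerivAt_id z).sub_const x).const_mul L).const_add (f x)
      exact this.hasDerivWithinAt)
    (by simp)
    (aux_cont hconv hd hx)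
    (fun z hz => hd z (hx.trans hz.1))
    (fun z hz => hL z hz.1 hz.2)
    (right_mem_Icc.mpr hxy)
  simpa using key

private lemma aux_upper (hconv : ConvexOn ℝ (Set.Ici (0 : ℝ)) f)
    (hd : ∀ s ∈ Set.Ici (0 : ℝ), HasDerivWithinAt f (ξ s) (Set.Ici s) s)
    {x y L : ℝ} (hy : 0 ≤ y) (hyx : y ≤ x)
    (hL : ∀ s, y ≤ s → s < x → ξ s ≤ L) : f x ≤ f y + L * (x - y) := by
  have key := image_le_of_deriv_right_le_deriv_boundary
    (f := f) (f' := ξ) (a := y) (b := x)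
    (B := fun z => f y + L * (z - y)) (B' := fun _ => L)
    (aux_cont hconv hd hy)
    (fun z hz => hd z (hy.trans hz.1))
    (by simp)
    (by fun_prop)
    (fun z _ => by
      have : HasDerivAt (fun z => f y + L * (z - y)) L z := by
        simpa using (((hasDerivAt_id z).sub_const y).const_mul L).const_add (f y)
      exact this.hasDerivWithinAt)
    (fun z hz => hL z hz.1 hz.2)
    (right_mem_Icc.mpr hyx)
  simpa using key

private lemma aux_lower' (hconv : ConvexOn ℝ (Set.Ici (0 : ℝ)) f)
    (hd : ∀ s ∈ Set.Ici (0 : ℝ), HasDerivWithinAt f (ξ s) (Set.Ici s) s)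
    {x y L : ℝ} (hx : 0 ≤ x) (hxy : x < y)
    (hS : ∀ δ > (0 : ℝ), ∃ s, x ≤ s ∧ s < x + δ ∧ L ≤ ξ s) :
    f x + L * (y - x) ≤ f y := by
  refine le_of_forall_pos_le_add fun ε hε => ?_
  have hcont : ContinuousWithinAt f (Ici x) x := (hd x hx).continuousWithinAt
  rw [Metric.continuousWithinAt_iff] at hcont
  obtain ⟨δ, hδ0, hδ⟩ := hcont (ε / 2) (by positivity)
  have habs : (0 : ℝ) < |L| + 1 := by positivity
  set δ' := min (min δ (y - x)) (ε / (2 * (|L| + 1))) with hδ'def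
  have hδ'0 : 0 < δ' := by
    refine lt_min (lt_min hδ0 (by linarith)) (by positivity)
  obtain ⟨s, hxs, hsδ, hLs⟩ := hS δ' hδ'0
  have hs0 : (0 : ℝ) ≤ s := hx.trans hxs
  have hδ'1 : δ' ≤ δ := (min_le_left _ _).trans (min_le_left _ _)
  have hδ'2 : δ' ≤ y - x := (min_le_left _ _).trans (min_le_right _ _)
  have hδ'3 : δ' ≤ ε / (2 * (|L| + 1)) := min_le_right _ _
  have hsy : s < y := by linarith
  have h1 : f s + L * (y - s) ≤ f y :=
    aux_lower hconv hd hs0 hsy.le fun u hsu _ =>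
      le_trans hLs (aux_mono hconv hd hs0 hsu)
  have h2 : dist (f s) (f x) < ε / 2 := by
    refine hδ hxs ?_
    rw [Real.dist_eq, abs_of_nonneg (by linarith)]
    linarith
  rw [Real.dist_eq] at h2
  have h2' := abs_lt.mp h2
  have h4 : L * (s - x) ≤ |L| * (s - x) :=
    mul_le_mul_of_nonneg_right (le_abs_self L) (by linarith)
  have h5 : |L| * (s - x) ≤ ε / 2 := by
    have hsx : s - x ≤ ε / (2 * (|L| + 1)) := by linarith
    calc |L| * (s - x) ≤ (|L| + 1) * (ε / (2 * (|L| + 1))) :=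
          mul_le_mul (by linarith) hsx (by linarith) (by positivity)
      _ = ε / 2 := by field_simp
  nlinarith [h1, h2'.1, h2'.2]

private lemma aux_key (hconv : ConvexOn ℝ (Set.Ici (0 : ℝ)) f)
    (hd : ∀ s ∈ Set.Ici (0 : ℝ), HasDerivWithinAt f (ξ s) (Set.Ici s) s)
    {L : ℝ} {T X : ℝ≥0∞}
    (hX : X = min (sInf (ENNReal.ofReal '' {s : ℝ | 0 ≤ s ∧ L ≤ ξ s})) T)
    (hXfin : X ≠ ⊤) {y : ℝ} (hy : 0 ≤ y) (hyT : ENNReal.ofReal y ≤ T) :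
    f X.toReal + L * (y - X.toReal) ≤ f y := by
  set c := X.toReal with hcdef
  have hc0 : 0 ≤ c := ENNReal.toReal_nonneg
  have hcX : ENNReal.ofReal c = X := ENNReal.ofReal_toReal hXfin
  set I := sInf (ENNReal.ofReal '' {s : ℝ | 0 ≤ s ∧ L ≤ ξ s}) with hIdef
  have hmemS : ∀ s : ℝ, 0 ≤ s → L ≤ ξ s → c ≤ s := by
    intro s hs hLs
    have h1 : I ≤ ENNReal.ofReal s := sInf_le (mem_image_of_mem _ ⟨hs, hLs⟩)
    have h2 : X ≤ ENNReal.ofReal s := hX ▸ (min_le_left _ _).trans h1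
    exact ENNReal.toReal_le_of_le_ofReal hs h2
  rcases lt_trichotomy y c with hlt | heq | hgt
  · have hupper : f c ≤ f y + L * (c - y) := by
      refine aux_upper hconv hd hy hlt.le fun s hys hsc => ?_
      by_contra h
      push_neg at h
      exact absurd (hmemS s (hy.trans hys) h.le) (not_le.mpr hsc)
    linarith
  · rw [heq]; ring_nf; exact le_rfl
  · have hy0 : 0 < y := hc0.trans_lt hgt
    have hXT : X < T := by
      calc X = ENNReal.ofReal c := hcX.symm
        _ < ENNReal.ofReal y := (ENNReal.ofReal_lt_ofReal_iff hy0).mpr hgt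
        _ ≤ T := hyT
    have hIT : I < T := by
      by_contra h
      push_neg at h
      rw [hX, min_eq_right h] at hXT
      exact lt_irrefl _ hXT
    have hXI : X = I := by rw [hX, min_eq_left hIT.le]
    refine aux_lower' hconv hd hc0 hgt fun δ hδ => ?_
    have hlt2 : I < ENNReal.ofReal (c + δ) := by
      rw [← hXI, ← hcX]
      exact (ENNReal.ofReal_lt_ofReal_iff (by linarith)).mpr (by linarith)
    obtain ⟨e, hemem, helt⟩ := sInf_lt_iff.mp hlt2
    obtain ⟨s, ⟨hs0, hLs⟩, rfl⟩ := hemem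
    refine ⟨s, hmemS s hs0 hLs, ?_, hLs⟩
    exact (ENNReal.ofReal_lt_ofReal_iff_of_nonneg hs0).mp helt

end Aux

/-- Separable convex optimization with linear constraints: if
`x_i^* = inf{t : ξ_i(t) ≥ a_i λ} ∧ t_i` satisfies `Σ a_i x_i^* = α`, then it
minimizes `Σ f_i(x_i)` subject to `x_i ∈ [0, t_i]` and `Σ a_i x_i = α`. -/
theorem stmt18 (n : ℕ) (f : Fin n → ℝ → ℝ) (ξ : Fin n → ℝ → ℝ)
    (hconv : ∀ i, ConvexOn ℝ (Set.Ici (0 : ℝ)) (f i))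
    (hderiv : ∀ i, ∀ s ∈ Set.Ici (0 : ℝ), HasDerivWithinAt (f i) (ξ i s) (Set.Ici s) s)
    (t : Fin n → ℝ≥0∞) (a : Fin n → ℝ) (ha : ∀ i, 0 < a i)
    (α : ℝ) (hα0 : 0 < α)
    (hαt : ENNReal.ofReal α < ∑ i, ENNReal.ofReal (a i) * t i)
    (lam : ℝ) (xstar : Fin n → ℝ≥0∞)
    (hxstar : ∀ i, xstar i =
      min (sInf (ENNReal.ofReal '' {s : ℝ | 0 ≤ s ∧ a i * lam ≤ ξ i s})) (t i))
    (hsum : (∑ i, ENNReal.ofReal (a i) * xstar i) = ENNReal.ofReal α) :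
    ∀ x : Fin n → ℝ, (∀ i, 0 ≤ x i) → (∀ i, ENNReal.ofReal (x i) ≤ t i) →
      (∑ i, a i * x i) = α →
      (∑ i, f i (xstar i).toReal) ≤ ∑ i, f i (x i) := by
  intro x hx0 hxt hxsum
  have hfin : ∀ i, xstar i ≠ ⊤ := by
    intro i h
    have hle : ENNReal.ofReal (a i) * xstar i ≤ ENNReal.ofReal α :=
      hsum ▸ Finset.single_le_sum (f := fun j => ENNReal.ofReal (a j) * xstar j)
        (fun j _ => zero_le) (Finset.mem_univ i)
    rw [h, ENNReal.mul_top (by simp [ENNReal.ofReal_eq_zero, not_le, ha i])] at hle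
    exact ENNReal.ofReal_ne_top (top_le_iff.mp hle)
  set c : Fin n → ℝ := fun i => (xstar i).toReal with hcdef
  have hkey : ∀ i, f i (c i) + (a i * lam) * (x i - c i) ≤ f i (x i) := fun i =>
    aux_key (hconv i) (hderiv i) (hxstar i) (hfin i) (hx0 i) (hxt i)
  have hsumc : ∑ i, a i * c i = α := by
    have h1 : (∑ i, ENNReal.ofReal (a i) * xstar i).toReal = α := by
      rw [hsum, ENNReal.toReal_ofReal hα0.le]
    rw [ENNReal.toReal_sum
      (fun i _ => ENNReal.mul_ne_top ENNReal.ofReal_ne_top (hfin i))] at h1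
    simpa [ENNReal.toReal_mul, ENNReal.toReal_ofReal (ha _).le] using h1
  have hsum2 : ∑ i, (a i * lam) * (x i - c i) = 0 := by
    have h2 : ∑ i, (a i * lam) * (x i - c i)
        = lam * (∑ i, a i * x i) - lam * (∑ i, a i * c i) := by
      rw [Finset.mul_sum, Finset.mul_sum, ← Finset.sum_sub_distrib]
      exact Finset.sum_congr rfl fun i _ => by ring
    rw [h2, hxsum, hsumc]; ring
  have hfinal := Finset.sum_le_sum (fun i (_ : i ∈ Finset.univ) => hkey i)
  rw [Finset.sum_add_distrib, hsum2, add_zero] at hfinal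
  exact hfinal
end
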